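/- arXiv:2210.13831 — 15 statements merged into one kernel-verified Lean document; each statement's English description precedes it below -/
import Mathlib

section
/- Let ρ ≥ 0 and let F : ℝ^d ⇉ ℝ^d be a maximally ρ-negatively comonotone set-valued operator. Then the solution set X* = {x ∈ ℝ^d : 0 ∈ F(x)} is convex. -/
open RealInnerProductSpace

/-- If `F : ℝ^d ⇉ ℝ^d` is maximally `ρ`-negatively comonotone, then the solution
set `X* = {x : 0 ∈ F x}` is convex. -/
theorem stmt_2 {d : ℕ} (ρ : ℝ) (hρ : 0 ≤ ρ)
    (F : EuclideanSpace ℝ (Fin d) → Set (EuclideanSpace ℝ (Fin d)))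
    (hcomon : ∀ x y u v, u ∈ F x → v ∈ F y → ⟪u - v, x - y⟫ ≥ -ρ * ‖u - v‖ ^ 2)
    (hmax : ∀ x u, (∀ y v, v ∈ F y → ⟪u - v, x - y⟫ ≥ -ρ * ‖u - v‖ ^ 2) → u ∈ F x) :
    Convex ℝ {x : EuclideanSpace ℝ (Fin d) | (0 : EuclideanSpace ℝ (Fin d)) ∈ F x} := by
  intro x₁ hx₁ x₂ hx₂ a b ha hb hab
  apply hmax
  intro y v hv
  have h1 := hcomon x₁ y 0 v hx₁ hv
  have h2 := hcomon x₂ y 0 v hx₂ hv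
  have key : ⟪(0 : EuclideanSpace ℝ (Fin d)) - v, (a • x₁ + b • x₂) - y⟫
      = a * ⟪(0 : EuclideanSpace ℝ (Fin d)) - v, x₁ - y⟫
        + b * ⟪(0 : EuclideanSpace ℝ (Fin d)) - v, x₂ - y⟫ := by
    have : (a • x₁ + b • x₂) - y = a • (x₁ - y) + b • (x₂ - y) := by
      linear_combination (norm := module) hab • y
    rw [this, inner_add_right, inner_smul_right, inner_smul_right]
  rw [key]
  calc a * ⟪(0 : EuclideanSpace ℝ (Fin d)) - v, x₁ - y⟫
        + b * ⟪(0 : EuclideanSpace ℝ (Fin d)) - v, x₂ - y⟫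
      ≥ a * (-ρ * ‖(0 : EuclideanSpace ℝ (Fin d)) - v‖ ^ 2)
        + b * (-ρ * ‖(0 : EuclideanSpace ℝ (Fin d)) - v‖ ^ 2) := by
        gcongr <;> first | exact h1 | exact h2
    _ = -ρ * ‖(0 : EuclideanSpace ℝ (Fin d)) - v‖ ^ 2 := by
        rw [← add_mul, hab, one_mul]
end

section
/- Let ρ ≥ 0, let F : ℝ^d → ℝ^d, let x* ∈ ℝ^d satisfy F(x*) = 0, and suppose F is ρ-star-negatively comonotone with respect to x*. Let γ > 2ρ and let (x^k) be a Proximal Point trajectory with stepsize γ. Then for every N ≥ 1: (1/N) ∑_{k=1}^{N} ‖x^k − x^{k−1}‖² ≤ γ‖x⁰ − x*‖² / ((γ − 2ρ)N). -/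
open RealInnerProductSpace

/-- Best-iterate `O(1/N)` rate for the Proximal Point method under
`ρ`-star-negative comonotonicity:
`(1/N) ∑_{k=1}^N ‖x^k − x^{k−1}‖² ≤ γ‖x⁰ − x*‖² / ((γ − 2ρ)N)`. -/
theorem stmt_3 {d : ℕ} (ρ : ℝ) (hρ : 0 ≤ ρ)
    (F : EuclideanSpace ℝ (Fin d) → EuclideanSpace ℝ (Fin d))
    (xs : EuclideanSpace ℝ (Fin d)) (hxs : F xs = 0)
    (hstar : ∀ x, ⟪F x, x - xs⟫ ≥ -ρ * ‖F x‖ ^ 2)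
    (γ : ℝ) (hγ : γ > 2 * ρ)
    (x : ℕ → EuclideanSpace ℝ (Fin d))
    (hx : ∀ k : ℕ, x (k + 1) = x k - γ • F (x (k + 1))) :
    ∀ N : ℕ, 1 ≤ N →
      (1 / (N : ℝ)) * ∑ k ∈ Finset.range N, ‖x (k + 1) - x k‖ ^ 2 ≤
        γ * ‖x 0 - xs‖ ^ 2 / ((γ - 2 * ρ) * N) := by
  have hγ0 : 0 < γ := by linarith
  have key : ∀ k : ℕ, (γ - 2 * ρ) / γ * ‖x (k + 1) - x k‖ ^ 2 ≤
      ‖x k - xs‖ ^ 2 - ‖x (k + 1) - xs‖ ^ 2 := by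
    intro k
    have h := hx k
    rw [eq_sub_iff_add_eq] at h
    have hdecomp : x k - xs = (x (k + 1) - xs) + γ • F (x (k + 1)) := by
      rw [← h]; abel
    have hnorm : ‖x k - xs‖ ^ 2 = ‖x (k + 1) - xs‖ ^ 2
        + 2 * (γ * ⟪F (x (k + 1)), x (k + 1) - xs⟫) + γ ^ 2 * ‖F (x (k + 1))‖ ^ 2 := by
      rw [hdecomp, norm_add_sq_real, real_inner_smul_right, norm_smul,
        real_inner_comm, mul_pow, Real.norm_eq_abs, sq_abs]
    have hdiff : ‖x (k + 1) - x k‖ ^ 2 = γ ^ 2 * ‖F (x (k + 1))‖ ^ 2 := by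
      have h2 : x (k + 1) - x k = -(γ • F (x (k + 1))) := by rw [← h]; abel
      rw [h2, norm_neg, norm_smul, mul_pow, Real.norm_eq_abs, sq_abs]
    have hinner := hstar (x (k + 1))
    rw [hdiff, hnorm]
    have hγne : γ ≠ 0 := ne_of_gt hγ0
    have hF : 0 ≤ ‖F (x (k + 1))‖ ^ 2 := by positivity
    have h5 : (γ - 2 * ρ) / γ * (γ ^ 2 * ‖F (x (k + 1))‖ ^ 2)
        = (γ - 2 * ρ) * γ * ‖F (x (k + 1))‖ ^ 2 := by field_simp
    rw [h5]
    nlinarith [mul_le_mul_of_nonneg_left hinner (le_of_lt hγ0)]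
  intro N hN
  set S := ∑ k ∈ Finset.range N, ‖x (k + 1) - x k‖ ^ 2 with hS
  have hSnonneg : 0 ≤ S := Finset.sum_nonneg fun k _ => by positivity
  have hsum : (γ - 2 * ρ) / γ * S ≤ ‖x 0 - xs‖ ^ 2 := by
    have h1 : (γ - 2 * ρ) / γ * S = ∑ k ∈ Finset.range N,
        (γ - 2 * ρ) / γ * ‖x (k + 1) - x k‖ ^ 2 := by
      rw [hS, Finset.mul_sum]
    have h2 : ∑ k ∈ Finset.range N,
        (γ - 2 * ρ) / γ * ‖x (k + 1) - x k‖ ^ 2 ≤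
        ∑ k ∈ Finset.range N, (‖x k - xs‖ ^ 2 - ‖x (k + 1) - xs‖ ^ 2) :=
      Finset.sum_le_sum fun k _ => key k
    have h3 : ∑ k ∈ Finset.range N, (‖x k - xs‖ ^ 2 - ‖x (k + 1) - xs‖ ^ 2)
        = ‖x 0 - xs‖ ^ 2 - ‖x N - xs‖ ^ 2 :=
      Finset.sum_range_sub' (fun k => ‖x k - xs‖ ^ 2) N
    have h4 : 0 ≤ ‖x N - xs‖ ^ 2 := by positivity
    rw [h1]
    linarith [h2, h3.le, h3.ge]
  have hNpos : (0 : ℝ) < N := by exact_mod_cast hN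
  have hNne : (N : ℝ) ≠ 0 := ne_of_gt hNpos
  have hmul : (γ - 2 * ρ) * S ≤ γ * ‖x 0 - xs‖ ^ 2 := by
    have := mul_le_mul_of_nonneg_left hsum (le_of_lt hγ0)
    calc (γ - 2 * ρ) * S = γ * ((γ - 2 * ρ) / γ * S) := by
          field_simp
      _ ≤ γ * ‖x 0 - xs‖ ^ 2 := this
  rw [le_div_iff₀ (mul_pos (by linarith) hNpos)]
  calc 1 / (N : ℝ) * S * ((γ - 2 * ρ) * N) = (γ - 2 * ρ) * S := by
        field_simp
    _ ≤ γ * ‖x 0 - xs‖ ^ 2 := hmul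
end

section
/- Let ρ ≥ 0, let F : ℝ^d → ℝ^d be ρ-negatively comonotone, let γ > 2ρ, and let (x^k) be a Proximal Point trajectory with stepsize γ. Then for every k ≥ 1: ‖x^{k+1} − x^k‖ ≤ ‖x^k − x^{k−1}‖. -/
open RealInnerProductSpace

/-- Monotone decrease of consecutive-iterate distances for the Proximal Point
method under `ρ`-negative comonotonicity with stepsize `γ > 2ρ`. -/
theorem stmt_4 {d : ℕ} (ρ : ℝ) (hρ : 0 ≤ ρ)
    (F : EuclideanSpace ℝ (Fin d) → EuclideanSpace ℝ (Fin d))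
    (hcomon : ∀ x y, ⟪F x - F y, x - y⟫ ≥ -ρ * ‖F x - F y‖ ^ 2)
    (γ : ℝ) (hγ : γ > 2 * ρ)
    (x : ℕ → EuclideanSpace ℝ (Fin d))
    (hx : ∀ k : ℕ, x (k + 1) = x k - γ • F (x (k + 1))) :
    ∀ k : ℕ, 1 ≤ k → ‖x (k + 1) - x k‖ ≤ ‖x k - x (k - 1)‖ := by
  intro k hk
  have hγ0 : 0 < γ := lt_of_le_of_lt (by linarith) hγ
  have hk1 : k - 1 + 1 = k := Nat.succ_pred_eq_of_pos hk
  set a := F (x (k + 1)) with ha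
  set b := F (x k) with hb
  have h1 : x (k + 1) - x k = (-γ) • a := by
    have := hx k
    rw [this]; module
  have h2 : x k - x (k - 1) = (-γ) • b := by
    have := hx (k - 1)
    rw [hk1] at this
    rw [this]; module
  have hcs : ⟪a, b⟫ ≤ ‖a‖ * ‖b‖ := real_inner_le_norm a b
  have hco := hcomon (x (k + 1)) (x k)
  rw [h1] at hco
  rw [inner_smul_right] at hco
  have hexp1 : ⟪a - b, a⟫ = ‖a‖ ^ 2 - ⟪a, b⟫ := by
    rw [inner_sub_left, real_inner_self_eq_norm_sq, real_inner_comm]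
  have hexp2 : ‖a - b‖ ^ 2 = ‖a‖ ^ 2 - 2 * ⟪a, b⟫ + ‖b‖ ^ 2 := by
    rw [norm_sub_sq_real]
  rw [hexp1, hexp2] at hco
  have ha0 : (0:ℝ) ≤ ‖a‖ := norm_nonneg a
  have hb0 : (0:ℝ) ≤ ‖b‖ := norm_nonneg b
  have hab : ‖a‖ ≤ ‖b‖ := by
    by_contra h
    push_neg at h
    have hA : 0 < ‖a‖ := lt_of_le_of_lt hb0 h
    have hγ2 : (0:ℝ) < γ - 2 * ρ := by linarith
    nlinarith [mul_le_mul_of_nonneg_left hcs hγ2.le,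
      mul_le_mul_of_nonneg_left h.le hρ,
      mul_pos hA (sub_pos.2 h), mul_nonneg hρ hb0,
      mul_lt_mul_of_pos_left h (mul_pos hγ2 hA)]
  rw [h1, h2, norm_smul, norm_smul]
  exact mul_le_mul_of_nonneg_left hab (norm_nonneg _)
end

section
/- Let ρ ≥ 0, let F : ℝ^d → ℝ^d be ρ-negatively comonotone, let x* ∈ ℝ^d satisfy F(x*) = 0, let γ > 2ρ, and let (x^k) be a Proximal Point trajectory with stepsize γ. Then for every N ≥ 1: ‖x^N − x^{N−1}‖² ≤ γ‖x⁰ − x*‖² / ((γ − 2ρ)N). -/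
open RealInnerProductSpace

/-- Last-iterate `O(1/N)` rate for the Proximal Point method under
`ρ`-negative comonotonicity: `‖x^N − x^{N−1}‖² ≤ γ‖x⁰ − x*‖² / ((γ − 2ρ)N)`. -/
theorem stmt_5 {d : ℕ} (ρ : ℝ) (hρ : 0 ≤ ρ)
    (F : EuclideanSpace ℝ (Fin d) → EuclideanSpace ℝ (Fin d))
    (hcomon : ∀ x y, ⟪F x - F y, x - y⟫ ≥ -ρ * ‖F x - F y‖ ^ 2)
    (xs : EuclideanSpace ℝ (Fin d)) (hxs : F xs = 0)
    (γ : ℝ) (hγ : γ > 2 * ρ)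
    (x : ℕ → EuclideanSpace ℝ (Fin d))
    (hx : ∀ k : ℕ, x (k + 1) = x k - γ • F (x (k + 1))) :
    ∀ N : ℕ, 1 ≤ N →
      ‖x N - x (N - 1)‖ ^ 2 ≤ γ * ‖x 0 - xs‖ ^ 2 / ((γ - 2 * ρ) * N) := by
  have hγ0 : 0 < γ := lt_of_le_of_lt (by positivity) hγ
  set g : ℕ → EuclideanSpace ℝ (Fin d) := fun k => F (x (k + 1)) with hg
  have hstep : ∀ k, x (k + 1) - x k = -(γ • g k) := by
    intro k; rw [hx k]; abel
  -- Key descent inequality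
  have keyA : ∀ k, ‖x (k + 1) - xs‖ ^ 2 + γ * (γ - 2 * ρ) * ‖g k‖ ^ 2
      ≤ ‖x k - xs‖ ^ 2 := by
    intro k
    have h1 : x k - xs = (x (k + 1) - xs) + γ • g k := by
      rw [hx k]; abel
    have h2 : ⟪g k - 0, x (k + 1) - xs⟫ ≥ -ρ * ‖g k - 0‖ ^ 2 := by
      have := hcomon (x (k + 1)) xs
      rw [hxs] at this
      exact this
    rw [sub_zero] at h2
    have h3 : ‖x k - xs‖ ^ 2 =
        ‖x (k + 1) - xs‖ ^ 2 + 2 * (γ * ⟪g k, x (k + 1) - xs⟫) + γ ^ 2 * ‖g k‖ ^ 2 := by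
      rw [h1, norm_add_sq_real, real_inner_smul_right, norm_smul, Real.norm_eq_abs, mul_pow, sq_abs,
        real_inner_comm]
    nlinarith [h2, hγ0, sq_nonneg ‖g k‖]
  -- Monotonicity of residuals
  have keyB : ∀ k, ‖g (k + 1)‖ ^ 2 ≤ ‖g k‖ ^ 2 := by
    intro k
    have h := hcomon (x (k + 2)) (x (k + 1))
    have hd : x (k + 2) - x (k + 1) = -(γ • g (k + 1)) := hstep (k + 1)
    rw [hd] at h
    have h2 : ⟪g (k + 1) - g k, -(γ • g (k + 1))⟫
        = -(γ * ⟪g (k + 1) - g k, g (k + 1)⟫) := by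
      rw [inner_neg_right, real_inner_smul_right]
    rw [h2] at h
    have h3 : ⟪g (k + 1) - g k, g (k + 1)⟫
        = ⟪g (k + 1), g (k + 1)⟫ - ⟪g k, g (k + 1)⟫ := by
      rw [inner_sub_left]
    have h4 : ‖g (k + 1) - g k‖ ^ 2
        = ‖g (k + 1)‖ ^ 2 - 2 * ⟪g (k + 1), g k⟫ + ‖g k‖ ^ 2 := norm_sub_sq_real _ _
    have h5 : ⟪g (k + 1), g (k + 1)⟫ = ‖g (k + 1)‖ ^ 2 := real_inner_self_eq_norm_sq _
    have h6 : ⟪g k, g (k + 1)⟫ = ⟪g (k + 1), g k⟫ := real_inner_comm _ _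
    nlinarith [h, sq_nonneg ‖g (k + 1) - g k‖, hγ0, hγ]
  have hmono : ∀ j k : ℕ, j ≤ k → ‖g k‖ ^ 2 ≤ ‖g j‖ ^ 2 := by
    intro j k hjk
    induction hjk with
    | refl => exact le_refl _
    | step _ ih => exact le_trans (keyB _) ih
  -- Summation
  have hsum : ∀ n : ℕ, γ * (γ - 2 * ρ) * ∑ k ∈ Finset.range n, ‖g k‖ ^ 2
      ≤ ‖x 0 - xs‖ ^ 2 - ‖x n - xs‖ ^ 2 := by
    intro n
    induction n with
    | zero => simp
    | succ n ih =>
      rw [Finset.sum_range_succ]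
      have := keyA n
      nlinarith [this, ih]
  intro N hN
  obtain ⟨M, rfl⟩ : ∃ M, N = M + 1 := ⟨N - 1, (Nat.succ_pred_eq_of_pos hN).symm⟩
  have hNsub : (M + 1) - 1 = M := rfl
  rw [hNsub]
  have hlast : x (M + 1) - x M = -(γ • g M) := hstep M
  have hnorm : ‖x (M + 1) - x M‖ ^ 2 = γ ^ 2 * ‖g M‖ ^ 2 := by
    rw [hlast, norm_neg, norm_smul, Real.norm_eq_abs, mul_pow, sq_abs]
  have hlb : (M + 1 : ℝ) * ‖g M‖ ^ 2 ≤ ∑ k ∈ Finset.range (M + 1), ‖g k‖ ^ 2 := by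
    calc (M + 1 : ℝ) * ‖g M‖ ^ 2
        = ∑ k ∈ Finset.range (M + 1), ‖g M‖ ^ 2 := by
          rw [Finset.sum_const, Finset.card_range, nsmul_eq_mul]; push_cast; ring
      _ ≤ ∑ k ∈ Finset.range (M + 1), ‖g k‖ ^ 2 := by
          apply Finset.sum_le_sum
          intro i hi
          exact hmono i M (Nat.lt_succ_iff.mp (Finset.mem_range.mp hi))
  have hS : γ * (γ - 2 * ρ) * ∑ k ∈ Finset.range (M + 1), ‖g k‖ ^ 2
      ≤ ‖x 0 - xs‖ ^ 2 := by
    have := hsum (M + 1)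
    nlinarith [sq_nonneg ‖x (M + 1) - xs‖]
  have hγρ : 0 < γ - 2 * ρ := by linarith
  have hNpos : (0 : ℝ) < (M + 1 : ℕ) := by positivity
  rw [hnorm, le_div_iff₀ (by positivity)]
  have hchain : γ * (γ - 2 * ρ) * ((M + 1 : ℝ) * ‖g M‖ ^ 2) ≤ ‖x 0 - xs‖ ^ 2 :=
    le_trans (mul_le_mul_of_nonneg_left hlb (by positivity)) hS
  push_cast
  push_cast at hchain
  nlinarith [hchain, hγ0]
end

section
/- Let ρ > 0, γ > 2ρ, and let N be a positive integer with N ≥ ρ²/(γ(γ − 2ρ)). Set α = 1/√(Nγ(γ − 2ρ)), c = −αρ, s = √(1 − c²), and define F : ℝ² → ℝ² by F(x) = α·A·x, where A is the 2×2 rotation matrix with first row (c, −s) and second row (s, c). Then: (i) F is ρ-negatively comonotone; and (ii) every Proximal Point trajectory (x^k) with stepsize γ for F satisfies ‖F(x^{N+1})‖² ≥ ‖x⁰‖² / (γ(γ − 2ρ)·N·(1 + 1/N)^{N+1}) (the solution is x* = 0). -/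
open RealInnerProductSpace

/-- Worst-case example for the Proximal Point method: the scaled rotation operator
`F(x) = α A x` (with `A` the rotation by angle `θ`, `cos θ = c = −αρ`,
`α = 1/√(Nγ(γ−2ρ))`) is `ρ`-negatively comonotone and every PP trajectory with
stepsize `γ` satisfies
`‖F(x^{N+1})‖² ≥ ‖x⁰‖² / (γ(γ−2ρ)N(1 + 1/N)^{N+1})` (the solution is `x* = 0`). -/
theorem stmt_6 (ρ γ : ℝ) (hρ : 0 < ρ) (hγ : γ > 2 * ρ)
    (N : ℕ) (hN1 : 1 ≤ N) (hN : (N : ℝ) ≥ ρ ^ 2 / (γ * (γ - 2 * ρ)))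
    (α c s : ℝ)
    (hα : α = 1 / Real.sqrt (N * γ * (γ - 2 * ρ)))
    (hc : c = -(α * ρ)) (hs : s = Real.sqrt (1 - c ^ 2))
    (F : EuclideanSpace ℝ (Fin 2) → EuclideanSpace ℝ (Fin 2))
    (hF : ∀ x : EuclideanSpace ℝ (Fin 2),
      F x 0 = α * (c * x 0 - s * x 1) ∧ F x 1 = α * (s * x 0 + c * x 1)) :
    (∀ x y, ⟪F x - F y, x - y⟫ ≥ -ρ * ‖F x - F y‖ ^ 2) ∧
    (∀ x : ℕ → EuclideanSpace ℝ (Fin 2),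
      (∀ k : ℕ, x (k + 1) = x k - γ • F (x (k + 1))) →
      ‖F (x (N + 1))‖ ^ 2 ≥
        ‖x 0‖ ^ 2 / (γ * (γ - 2 * ρ) * N * (1 + 1 / (N : ℝ)) ^ (N + 1))) := by
  have hγ0 : 0 < γ := by linarith
  have hd : 0 < γ - 2 * ρ := by linarith
  have hNpos : (0:ℝ) < (N:ℝ) := by exact_mod_cast Nat.lt_of_lt_of_le Nat.zero_lt_one hN1
  have hD : 0 < (N:ℝ) * γ * (γ - 2 * ρ) := by positivity
  have hα0 : 0 < α := by rw [hα]; positivity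
  have hα2 : α ^ 2 = 1 / ((N:ℝ) * γ * (γ - 2 * ρ)) := by
    rw [hα, div_pow, one_pow, Real.sq_sqrt hD.le]
  have hNγ : ρ ^ 2 ≤ (N:ℝ) * γ * (γ - 2 * ρ) := by
    have h := (div_le_iff₀ (by positivity : (0:ℝ) < γ * (γ - 2 * ρ))).mp hN
    nlinarith [h]
  have hc2' : c ^ 2 = α ^ 2 * ρ ^ 2 := by rw [hc]; ring
  have hc2 : c ^ 2 ≤ 1 := by
    have h1 : c ^ 2 = ρ ^ 2 / ((N:ℝ) * γ * (γ - 2 * ρ)) := by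
      rw [hc2', hα2]; ring
    rw [h1]
    exact (div_le_one hD).mpr hNγ
  have hs2 : s ^ 2 = 1 - c ^ 2 := by
    rw [hs, Real.sq_sqrt (by linarith)]
  have hcs : c ^ 2 + s ^ 2 = 1 := by rw [hs2]; ring
  have hnorm : ∀ u : EuclideanSpace ℝ (Fin 2), ‖u‖ ^ 2 = (u 0) ^ 2 + (u 1) ^ 2 := by
    intro u
    rw [← real_inner_self_eq_norm_sq]
    simp only [PiLp.inner_apply, Fin.sum_univ_two, RCLike.inner_apply, conj_trivial]
    ring
  have hinner : ∀ u v : EuclideanSpace ℝ (Fin 2),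
      ⟪u, v⟫ = u 0 * v 0 + u 1 * v 1 := by
    intro u v
    simp [PiLp.inner_apply, Fin.sum_univ_two, RCLike.inner_apply]
    ring
  have hβ : γ ^ 2 * α ^ 2 + 2 * γ * α * c = 1 / (N:ℝ) := by
    rw [hc]
    have h2 : γ ^ 2 * α ^ 2 + 2 * γ * α * (-(α * ρ)) = γ * (γ - 2 * ρ) * α ^ 2 := by
      ring
    rw [h2, hα2]
    field_simp
  constructor
  · intro x y
    have e : ⟪F x - F y, x - y⟫ = -ρ * ‖F x - F y‖ ^ 2 := by
      rw [hinner, hnorm]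
      have h0 : (F x - F y) 0 = α * (c * (x 0 - y 0) - s * (x 1 - y 1)) := by
        have := (hF x).1
        have := (hF y).1
        simp only [PiLp.sub_apply]
        rw [(hF x).1, (hF y).1]; ring
      have h1 : (F x - F y) 1 = α * (s * (x 0 - y 0) + c * (x 1 - y 1)) := by
        simp only [PiLp.sub_apply]
        rw [(hF x).2, (hF y).2]; ring
      have hx0 : (x - y) 0 = x 0 - y 0 := by simp [PiLp.sub_apply]
      have hx1 : (x - y) 1 = x 1 - y 1 := by simp [PiLp.sub_apply]
      rw [h0, h1, hx0, hx1]
      linear_combination (α * ((x 0 - y 0) ^ 2 + (x 1 - y 1) ^ 2)) * hc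
        + (ρ * α ^ 2 * ((x 0 - y 0) ^ 2 + (x 1 - y 1) ^ 2)) * hcs
    exact ge_of_eq e
  · intro x hx
    have key : ∀ k, ‖x k‖ ^ 2 = (1 + 1 / (N:ℝ)) * ‖x (k + 1)‖ ^ 2 := by
      intro k
      have hrec : x k = x (k + 1) + γ • F (x (k + 1)) :=
        sub_eq_iff_eq_add.mp (hx k).symm
      have h0 : x k 0 = x (k + 1) 0
          + γ * (α * (c * x (k + 1) 0 - s * x (k + 1) 1)) := by
        rw [hrec]
        simp only [PiLp.add_apply, PiLp.smul_apply, smul_eq_mul]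
        rw [(hF (x (k + 1))).1]
      have h1 : x k 1 = x (k + 1) 1
          + γ * (α * (s * x (k + 1) 0 + c * x (k + 1) 1)) := by
        rw [hrec]
        simp only [PiLp.add_apply, PiLp.smul_apply, smul_eq_mul]
        rw [(hF (x (k + 1))).2]
      rw [hnorm (x k), hnorm (x (k + 1)), h0, h1]
      linear_combination ((x (k + 1) 0) ^ 2 + (x (k + 1) 1) ^ 2) * hβ
        + (γ ^ 2 * α ^ 2 * ((x (k + 1) 0) ^ 2 + (x (k + 1) 1) ^ 2)) * hcs
    have pow : ∀ m : ℕ, ‖x 0‖ ^ 2 = (1 + 1 / (N:ℝ)) ^ m * ‖x m‖ ^ 2 := by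
      intro m
      induction m with
      | zero => simp
      | succ m ih =>
        rw [ih, key m, pow_succ]
        ring
    have hFz : ‖F (x (N + 1))‖ ^ 2 = α ^ 2 * ‖x (N + 1)‖ ^ 2 := by
      rw [hnorm (F (x (N + 1))), hnorm (x (N + 1)),
        (hF (x (N + 1))).1, (hF (x (N + 1))).2]
      linear_combination (α ^ 2 * ((x (N + 1) 0) ^ 2 + (x (N + 1) 1) ^ 2)) * hcs
    have hb : (0:ℝ) < (1 + 1 / (N:ℝ)) ^ (N + 1) := by positivity
    have hpow := pow (N + 1)
    have heq : α ^ 2 * ‖x (N + 1)‖ ^ 2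
        = ‖x 0‖ ^ 2 / (γ * (γ - 2 * ρ) * N * (1 + 1 / (N:ℝ)) ^ (N + 1)) := by
      rw [hpow, hα2]
      field_simp
    rw [hFz, heq]
end

section
/- Let ρ ≥ 0, L > 0, let F : ℝ^d → ℝ^d be L-Lipschitz and ρ-star-negatively comonotone with respect to x* with F(x*) = 0, and let (x^k), (x̃^k) be Extragradient iterates with stepsizes γ₁, γ₂ > 0. Then for every k ≥ 0: ‖x^{k+1} − x*‖² ≤ ‖x^k − x*‖² − γ₂(γ₁ − 2ρ − γ₂)‖F(x̃^k)‖² − γ₁γ₂(1 − L²γ₁²)‖F(x^k)‖². -/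
open RealInnerProductSpace

/-- Key one-step inequality for Extragradient under `L`-Lipschitzness and
`ρ`-star-negative comonotonicity:
`‖x^{k+1} − x*‖² ≤ ‖x^k − x*‖² − γ₂(γ₁ − 2ρ − γ₂)‖F(x̃^k)‖² − γ₁γ₂(1 − L²γ₁²)‖F(x^k)‖²`. -/
theorem stmt_8 {d : ℕ} (ρ L : ℝ) (hρ : 0 ≤ ρ) (hL : 0 < L)
    (F : EuclideanSpace ℝ (Fin d) → EuclideanSpace ℝ (Fin d))
    (hLip : ∀ x y, ‖F x - F y‖ ≤ L * ‖x - y‖)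
    (xs : EuclideanSpace ℝ (Fin d)) (hxs : F xs = 0)
    (hstar : ∀ x, ⟪F x, x - xs⟫ ≥ -ρ * ‖F x‖ ^ 2)
    (γ₁ γ₂ : ℝ) (hγ₁ : 0 < γ₁) (hγ₂ : 0 < γ₂)
    (x xt : ℕ → EuclideanSpace ℝ (Fin d))
    (hxt : ∀ k : ℕ, xt k = x k - γ₁ • F (x k))
    (hx : ∀ k : ℕ, x (k + 1) = x k - γ₂ • F (xt k)) :
    ∀ k : ℕ,
      ‖x (k + 1) - xs‖ ^ 2 ≤ ‖x k - xs‖ ^ 2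
        - γ₂ * (γ₁ - 2 * ρ - γ₂) * ‖F (xt k)‖ ^ 2
        - γ₁ * γ₂ * (1 - L ^ 2 * γ₁ ^ 2) * ‖F (x k)‖ ^ 2 := by
  intro k
  have hxtk := hxt k
  have hxk := hx k
  set g := F (x k) with hg
  set gt := F (xt k) with hgt
  have h1 : ‖x (k+1) - xs‖ ^ 2 = ‖x k - xs‖ ^ 2 - 2 * γ₂ * ⟪gt, x k - xs⟫ + γ₂ ^ 2 * ‖gt‖ ^ 2 := by
    rw [hxk]
    have h : x k - γ₂ • gt - xs = (x k - xs) - γ₂ • gt := by abel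
    rw [h, norm_sub_sq_real, real_inner_smul_right, norm_smul, Real.norm_eq_abs,
      abs_of_pos hγ₂, mul_pow, real_inner_comm]
    ring
  have h2 : ⟪gt, x k - xs⟫ = ⟪gt, xt k - xs⟫ + γ₁ * ⟪gt, g⟫ := by
    have h : x k - xs = (xt k - xs) + γ₁ • g := by rw [hxtk]; abel
    rw [h, inner_add_right, real_inner_smul_right]
  have h3 : ⟪gt, xt k - xs⟫ ≥ -ρ * ‖gt‖ ^ 2 := hstar (xt k)
  have hlip : ‖gt - g‖ ≤ L * (γ₁ * ‖g‖) := by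
    have h := hLip (xt k) (x k)
    have hd : xt k - x k = -(γ₁ • g) := by rw [hxtk]; abel
    rw [hd, norm_neg, norm_smul, Real.norm_eq_abs, abs_of_pos hγ₁] at h
    linarith
  have h4 : ‖gt - g‖ ^ 2 ≤ L ^ 2 * γ₁ ^ 2 * ‖g‖ ^ 2 := by
    nlinarith [norm_nonneg (gt - g), norm_nonneg g, mul_pos hL hγ₁]
  have h5 : ‖gt - g‖ ^ 2 = ‖gt‖ ^ 2 - 2 * ⟪gt, g⟫ + ‖g‖ ^ 2 := by
    rw [norm_sub_sq_real]
  have h6 : γ₁ * γ₂ * ‖gt - g‖ ^ 2 = γ₁ * γ₂ * (‖gt‖ ^ 2 - 2 * ⟪gt, g⟫ + ‖g‖ ^ 2) := by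
    rw [h5]
  have h7 : γ₁ * γ₂ * ‖gt - g‖ ^ 2 ≤ γ₁ * γ₂ * (L ^ 2 * γ₁ ^ 2 * ‖g‖ ^ 2) :=
    mul_le_mul_of_nonneg_left h4 (mul_pos hγ₁ hγ₂).le
  have h8 : γ₂ * (-ρ * ‖gt‖ ^ 2) ≤ γ₂ * ⟪gt, xt k - xs⟫ :=
    mul_le_mul_of_nonneg_left (ge_iff_le.mp h3) hγ₂.le
  nlinarith [h1, h2, h6, h7, h8]
end

section
/- Let ρ ≥ 0, L > 0, let F : ℝ^d → ℝ^d be L-Lipschitz and ρ-star-negatively comonotone with respect to x* with F(x*) = 0. If 2ρ < γ₁ < 1/L and 0 < γ₂ ≤ γ₁ − 2ρ, then the Extragradient iterates with stepsizes γ₁, γ₂ satisfy, for every N ≥ 0: (1/(N+1)) ∑_{k=0}^{N} ‖F(x^k)‖² ≤ ‖x⁰ − x*‖² / (γ₁γ₂(1 − L²γ₁²)(N+1)). -/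
open RealInnerProductSpace

/-- Best-iterate `O(1/N)` rate for Extragradient under `L`-Lipschitzness and
`ρ`-star-negative comonotonicity, with `2ρ < γ₁ < 1/L` and `0 < γ₂ ≤ γ₁ − 2ρ`:
`(1/(N+1)) ∑_{k=0}^N ‖F(x^k)‖² ≤ ‖x⁰ − x*‖²/(γ₁γ₂(1 − L²γ₁²)(N+1))`. -/
theorem stmt_9 {d : ℕ} (ρ L : ℝ) (hρ : 0 ≤ ρ) (hL : 0 < L)
    (F : EuclideanSpace ℝ (Fin d) → EuclideanSpace ℝ (Fin d))
    (hLip : ∀ x y, ‖F x - F y‖ ≤ L * ‖x - y‖)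
    (xs : EuclideanSpace ℝ (Fin d)) (hxs : F xs = 0)
    (hstar : ∀ x, ⟪F x, x - xs⟫ ≥ -ρ * ‖F x‖ ^ 2)
    (γ₁ γ₂ : ℝ) (hγ₁l : 2 * ρ < γ₁) (hγ₁u : γ₁ < 1 / L)
    (hγ₂l : 0 < γ₂) (hγ₂u : γ₂ ≤ γ₁ - 2 * ρ)
    (x xt : ℕ → EuclideanSpace ℝ (Fin d))
    (hxt : ∀ k : ℕ, xt k = x k - γ₁ • F (x k))
    (hx : ∀ k : ℕ, x (k + 1) = x k - γ₂ • F (xt k)) :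
    ∀ N : ℕ,
      (1 / ((N : ℝ) + 1)) * ∑ k ∈ Finset.range (N + 1), ‖F (x k)‖ ^ 2 ≤
        ‖x 0 - xs‖ ^ 2 / (γ₁ * γ₂ * (1 - L ^ 2 * γ₁ ^ 2) * ((N : ℝ) + 1)) := by
  have hγ₁pos : 0 < γ₁ := lt_of_le_of_lt (by linarith) hγ₁l
  have hLγ : L * γ₁ < 1 := by
    have := (lt_div_iff₀ hL).mp hγ₁u
    linarith
  have hQ : 0 < 1 - L ^ 2 * γ₁ ^ 2 := by nlinarith [mul_pos hL hγ₁pos]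
  have hC : 0 < γ₁ * γ₂ * (1 - L ^ 2 * γ₁ ^ 2) :=
    mul_pos (mul_pos hγ₁pos hγ₂l) hQ
  set C : ℝ := γ₁ * γ₂ * (1 - L ^ 2 * γ₁ ^ 2) with hCdef
  -- per-step inequality
  have step : ∀ k : ℕ, C * ‖F (x k)‖ ^ 2 ≤ ‖x k - xs‖ ^ 2 - ‖x (k + 1) - xs‖ ^ 2 := by
    intro k
    set u := x k - xs with hu
    set v := F (xt k) with hv
    set w := F (x k) with hw
    have h1 : ‖x (k + 1) - xs‖ ^ 2 = ‖u‖ ^ 2 - 2 * (γ₂ * ⟪u, v⟫) + γ₂ ^ 2 * ‖v‖ ^ 2 := by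
      have : x (k + 1) - xs = u - γ₂ • v := by rw [hx k, hu]; abel
      rw [this, norm_sub_sq_real, real_inner_smul_right, norm_smul]
      rw [Real.norm_eq_abs, abs_of_pos hγ₂l]
      ring
    have h2 : ⟪v, xt k - xs⟫ = ⟪u, v⟫ - γ₁ * ⟪v, w⟫ := by
      have : xt k - xs = u - γ₁ • w := by rw [hxt k, hu]; abel
      rw [this, inner_sub_right, real_inner_smul_right, real_inner_comm v u]
    have h3 : ⟪v, xt k - xs⟫ ≥ -ρ * ‖v‖ ^ 2 := hstar (xt k)
    have h4 : 2 * ⟪v, w⟫ = ‖v‖ ^ 2 + ‖w‖ ^ 2 - ‖v - w‖ ^ 2 := by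
      have := norm_sub_sq_real v w
      linarith
    have h5 : ‖v - w‖ ≤ L * (γ₁ * ‖w‖) := by
      have hd : xt k - x k = -(γ₁ • w) := by rw [hxt k]; abel
      have := hLip (xt k) (x k)
      rwa [hd, norm_neg, norm_smul, Real.norm_eq_abs, abs_of_pos hγ₁pos] at this
    have h5' : ‖v - w‖ ^ 2 ≤ L ^ 2 * γ₁ ^ 2 * ‖w‖ ^ 2 := by
      nlinarith [norm_nonneg (v - w), norm_nonneg w]
    have e1 : 0 ≤ γ₂ * (⟪v, xt k - xs⟫ + ρ * ‖v‖ ^ 2) :=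
      mul_nonneg hγ₂l.le (by linarith)
    have e2 : 0 ≤ γ₂ * γ₁ * (L ^ 2 * γ₁ ^ 2 * ‖w‖ ^ 2 - ‖v - w‖ ^ 2) :=
      mul_nonneg (mul_nonneg hγ₂l.le hγ₁pos.le) (by linarith)
    have e3 : γ₂ * γ₁ * (2 * ⟪v, w⟫) = γ₂ * γ₁ * (‖v‖ ^ 2 + ‖w‖ ^ 2 - ‖v - w‖ ^ 2) := by
      rw [h4]
    have e4 : 0 ≤ γ₂ * (γ₁ - 2 * ρ - γ₂) * ‖v‖ ^ 2 :=
      mul_nonneg (mul_nonneg hγ₂l.le (by linarith)) (sq_nonneg _)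
    have e5 : γ₂ * ⟪u, v⟫ = γ₂ * ⟪v, xt k - xs⟫ + γ₂ * (γ₁ * ⟪v, w⟫) := by
      rw [h2]; ring
    rw [hCdef]
    linarith [e1, e2, e3, e4, e5, h1]
  -- telescoping
  have tele : ∀ N : ℕ, C * ∑ k ∈ Finset.range (N + 1), ‖F (x k)‖ ^ 2 ≤
      ‖x 0 - xs‖ ^ 2 - ‖x (N + 1) - xs‖ ^ 2 := by
    intro N
    induction N with
    | zero => simpa using step 0
    | succ n ih =>
      rw [Finset.sum_range_succ, mul_add]
      have := step (n + 1)
      linarith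
  intro N
  have hN1 : (0 : ℝ) < (N : ℝ) + 1 := by positivity
  have hS : C * ∑ k ∈ Finset.range (N + 1), ‖F (x k)‖ ^ 2 ≤ ‖x 0 - xs‖ ^ 2 := by
    have := tele N
    nlinarith [sq_nonneg ‖x (N + 1) - xs‖]
  rw [one_div, inv_mul_eq_div, div_le_div_iff₀ hN1 (by positivity)]
  nlinarith [mul_le_mul_of_nonneg_right hS hN1.le]
end

section
/- Let ρ ≥ 0, L > 0, let F : ℝ^d → ℝ^d be L-Lipschitz and ρ-star-negatively comonotone with respect to x* with F(x*) = 0. If 2ρ < γ₁ ≤ 1/L and 0 < γ₂ < γ₁ − 2ρ, then the Extragradient iterates with stepsizes γ₁, γ₂ satisfy, for every N ≥ 0: (1/(N+1)) ∑_{k=0}^{N} ‖F(x̃^k)‖² ≤ ‖x⁰ − x*‖² / (γ₂(γ₁ − 2ρ − γ₂)(N+1)). -/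
open RealInnerProductSpace

set_option maxHeartbeats 1000000 in
/-- Best-iterate `O(1/N)` rate for Extragradient in terms of `‖F(x̃^k)‖²` under
`L`-Lipschitzness and `ρ`-star-negative comonotonicity, with `2ρ < γ₁ ≤ 1/L` and
`0 < γ₂ < γ₁ − 2ρ`:
`(1/(N+1)) ∑_{k=0}^N ‖F(x̃^k)‖² ≤ ‖x⁰ − x*‖²/(γ₂(γ₁ − 2ρ − γ₂)(N+1))`. -/
theorem stmt_10 {d : ℕ} (ρ L : ℝ) (hρ : 0 ≤ ρ) (hL : 0 < L)
    (F : EuclideanSpace ℝ (Fin d) → EuclideanSpace ℝ (Fin d))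
    (hLip : ∀ x y, ‖F x - F y‖ ≤ L * ‖x - y‖)
    (xs : EuclideanSpace ℝ (Fin d)) (hxs : F xs = 0)
    (hstar : ∀ x, ⟪F x, x - xs⟫ ≥ -ρ * ‖F x‖ ^ 2)
    (γ₁ γ₂ : ℝ) (hγ₁l : 2 * ρ < γ₁) (hγ₁u : γ₁ ≤ 1 / L)
    (hγ₂l : 0 < γ₂) (hγ₂u : γ₂ < γ₁ - 2 * ρ)
    (x xt : ℕ → EuclideanSpace ℝ (Fin d))
    (hxt : ∀ k : ℕ, xt k = x k - γ₁ • F (x k))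
    (hx : ∀ k : ℕ, x (k + 1) = x k - γ₂ • F (xt k)) :
    ∀ N : ℕ,
      (1 / ((N : ℝ) + 1)) * ∑ k ∈ Finset.range (N + 1), ‖F (xt k)‖ ^ 2 ≤
        ‖x 0 - xs‖ ^ 2 / (γ₂ * (γ₁ - 2 * ρ - γ₂) * ((N : ℝ) + 1)) := by
  intro N
  have hγ₁pos : 0 < γ₁ := lt_of_le_of_lt (by positivity) hγ₁l
  have hLγ : γ₁ * L ≤ 1 := by
    rw [le_div_iff₀ hL] at hγ₁u; linarith
  set c := γ₂ * (γ₁ - 2 * ρ - γ₂) with hc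
  have hcpos : 0 < c := mul_pos hγ₂l (by linarith)
  have key : ∀ k, c * ‖F (xt k)‖ ^ 2 ≤ ‖x k - xs‖ ^ 2 - ‖x (k + 1) - xs‖ ^ 2 := by
    intro k
    set a := x k - xs with ha
    set u := F (x k) with hu
    set v := F (xt k) with hv
    have hvu : ‖v - u‖ ≤ ‖u‖ := by
      have h1 : ‖v - u‖ ≤ L * ‖xt k - x k‖ := hLip _ _
      have h2 : xt k - x k = -(γ₁ • u) := by rw [hxt]; abel
      have h3 : ‖xt k - x k‖ = γ₁ * ‖u‖ := by
        rw [h2, norm_neg, norm_smul, Real.norm_eq_abs, abs_of_pos hγ₁pos]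
      nlinarith [norm_nonneg u]
    have hvu2 : ‖v‖ ^ 2 ≤ 2 * ⟪v, u⟫ := by
      have hns := norm_sub_sq_real v u
      nlinarith [norm_nonneg u, norm_nonneg (v - u)]
    have hstar' : ⟪v, a - γ₁ • u⟫ ≥ -ρ * ‖v‖ ^ 2 := by
      have h := hstar (xt k)
      have h2 : xt k - xs = a - γ₁ • u := by rw [hxt, ha]; abel
      rwa [h2] at h
    have hva : (γ₁ / 2 - ρ) * ‖v‖ ^ 2 ≤ ⟪v, a⟫ := by
      have hsplit : ⟪v, a⟫ = ⟪v, a - γ₁ • u⟫ + γ₁ * ⟪v, u⟫ := by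
        rw [← real_inner_smul_right, ← inner_add_right]
        congr 1
        abel
      nlinarith [hstar', hvu2]
    have hexp : ‖x (k + 1) - xs‖ ^ 2 = ‖a‖ ^ 2 - 2 * γ₂ * ⟪v, a⟫ + γ₂ ^ 2 * ‖v‖ ^ 2 := by
      have h2 : x (k + 1) - xs = a - γ₂ • v := by rw [hx, ha]; abel
      rw [h2, norm_sub_sq_real, real_inner_smul_right, norm_smul, Real.norm_eq_abs,
        abs_of_pos hγ₂l, real_inner_comm]
      ring
    rw [hexp]
    nlinarith [hva, norm_nonneg v, sq_nonneg ‖v‖]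
  have hsum : c * ∑ k ∈ Finset.range (N + 1), ‖F (xt k)‖ ^ 2 ≤ ‖x 0 - xs‖ ^ 2 := by
    rw [Finset.mul_sum]
    calc ∑ k ∈ Finset.range (N + 1), c * ‖F (xt k)‖ ^ 2
        ≤ ∑ k ∈ Finset.range (N + 1), (‖x k - xs‖ ^ 2 - ‖x (k + 1) - xs‖ ^ 2) :=
          Finset.sum_le_sum fun k _ => key k
      _ = ‖x 0 - xs‖ ^ 2 - ‖x (N + 1) - xs‖ ^ 2 :=
          Finset.sum_range_sub' (fun k => ‖x k - xs‖ ^ 2) (N + 1)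
      _ ≤ ‖x 0 - xs‖ ^ 2 := by nlinarith [sq_nonneg ‖x (N + 1) - xs‖]
  have hN : (0 : ℝ) < (N : ℝ) + 1 := by positivity
  rw [one_div, inv_mul_eq_div, div_le_div_iff₀ hN (by positivity)]
  nlinarith [hsum, hN]
end

section
/- Let ρ ≥ 0, L > 0, let F : ℝ^d → ℝ^d be L-Lipschitz and ρ-negatively comonotone, and let (x^k), (x̃^k) be Extragradient iterates with equal stepsizes γ₁ = γ₂ = γ > 0. Then for every k ≥ 0: ‖F(x^{k+1})‖² ≤ ‖F(x^k)‖² − (1/2 − 2L²γ²)‖F(x̃^k) − F(x^k)‖² − (1/2 − ρ/γ)‖F(x̃^k) − F(x^{k+1})‖² − (1/2 − 2ρ/γ)‖F(x^k) − F(x^{k+1})‖². In particular, if additionally γ ≤ 1/(2L) and γ ≥ 4ρ, then ‖F(x^{k+1})‖ ≤ ‖F(x^k)‖ for all k ≥ 0. -/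
open RealInnerProductSpace

set_option maxHeartbeats 1000000

/-- Operator-norm decrease inequality for Extragradient with equal stepsizes
`γ₁ = γ₂ = γ` under `L`-Lipschitzness and `ρ`-negative comonotonicity, together
with the monotone decrease `‖F(x^{k+1})‖ ≤ ‖F(x^k)‖` when `4ρ ≤ γ ≤ 1/(2L)`. -/
theorem stmt_11 {d : ℕ} (ρ L : ℝ) (hρ : 0 ≤ ρ) (hL : 0 < L)
    (F : EuclideanSpace ℝ (Fin d) → EuclideanSpace ℝ (Fin d))
    (hLip : ∀ x y, ‖F x - F y‖ ≤ L * ‖x - y‖)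
    (hcomon : ∀ x y, ⟪F x - F y, x - y⟫ ≥ -ρ * ‖F x - F y‖ ^ 2)
    (γ : ℝ) (hγ : 0 < γ)
    (x xt : ℕ → EuclideanSpace ℝ (Fin d))
    (hxt : ∀ k : ℕ, xt k = x k - γ • F (x k))
    (hx : ∀ k : ℕ, x (k + 1) = x k - γ • F (xt k)) :
    (∀ k : ℕ,
      ‖F (x (k + 1))‖ ^ 2 ≤ ‖F (x k)‖ ^ 2
        - (1 / 2 - 2 * L ^ 2 * γ ^ 2) * ‖F (xt k) - F (x k)‖ ^ 2
        - (1 / 2 - ρ / γ) * ‖F (xt k) - F (x (k + 1))‖ ^ 2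
        - (1 / 2 - 2 * ρ / γ) * ‖F (x k) - F (x (k + 1))‖ ^ 2) ∧
    (γ ≤ 1 / (2 * L) → 4 * ρ ≤ γ →
      ∀ k : ℕ, ‖F (x (k + 1))‖ ≤ ‖F (x k)‖) := by
  have main : ∀ k : ℕ,
      ‖F (x (k + 1))‖ ^ 2 ≤ ‖F (x k)‖ ^ 2
        - (1 / 2 - 2 * L ^ 2 * γ ^ 2) * ‖F (xt k) - F (x k)‖ ^ 2
        - (1 / 2 - ρ / γ) * ‖F (xt k) - F (x (k + 1))‖ ^ 2
        - (1 / 2 - 2 * ρ / γ) * ‖F (x k) - F (x (k + 1))‖ ^ 2 := by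
    intro k
    set a := F (x k) with ha
    set b := F (xt k) with hb
    set c := F (x (k + 1)) with hc
    have v1 : xt k - x (k + 1) = γ • (b - a) := by
      rw [hxt k, hx k]; module
    have v2 : x k - x (k + 1) = γ • b := by
      rw [hx k]; module
    -- comonotonicity at (xt k, x (k+1))
    have h1 : -ρ * ‖b - c‖ ^ 2 ≤ γ * ⟪b - c, b - a⟫ := by
      have := hcomon (xt k) (x (k + 1))
      rw [v1, real_inner_smul_right] at this
      exact this
    have h1' : -(ρ / γ) * ‖b - c‖ ^ 2 ≤ ⟪b - c, b - a⟫ := by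
      rw [show -(ρ / γ) * ‖b - c‖ ^ 2 = -(ρ * ‖b - c‖ ^ 2) / γ by ring,
        div_le_iff₀ hγ]
      nlinarith [h1]
    -- comonotonicity at (x k, x (k+1))
    have h2 : -ρ * ‖a - c‖ ^ 2 ≤ γ * ⟪a - c, b⟫ := by
      have := hcomon (x k) (x (k + 1))
      rw [v2, real_inner_smul_right] at this
      exact this
    have h2' : -(ρ / γ) * ‖a - c‖ ^ 2 ≤ ⟪a - c, b⟫ := by
      rw [show -(ρ / γ) * ‖a - c‖ ^ 2 = -(ρ * ‖a - c‖ ^ 2) / γ by ring,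
        div_le_iff₀ hγ]
      nlinarith [h2]
    -- Lipschitz at (xt k, x (k+1))
    have h3 : ‖b - c‖ ≤ L * (γ * ‖b - a‖) := by
      have := hLip (xt k) (x (k + 1))
      rwa [v1, norm_smul, Real.norm_eq_abs, abs_of_pos hγ] at this
    have h3sq : ‖b - c‖ ^ 2 ≤ L ^ 2 * γ ^ 2 * ‖b - a‖ ^ 2 := by
      nlinarith [norm_nonneg (b - c), norm_nonneg (b - a), mul_pos hL hγ, h3]
    -- expansions
    have e1 : ‖b - a‖ ^ 2 = ‖b‖ ^ 2 - 2 * ⟪b, a⟫ + ‖a‖ ^ 2 := norm_sub_sq_real b a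
    have e2 : ‖b - c‖ ^ 2 = ‖b‖ ^ 2 - 2 * ⟪b, c⟫ + ‖c‖ ^ 2 := norm_sub_sq_real b c
    have e3 : ‖a - c‖ ^ 2 = ‖a‖ ^ 2 - 2 * ⟪a, c⟫ + ‖c‖ ^ 2 := norm_sub_sq_real a c
    have i1 : ⟪b - c, b - a⟫ = ⟪b, b⟫ - ⟪b, a⟫ - (⟪c, b⟫ - ⟪c, a⟫) := by
      simp only [inner_sub_left, inner_sub_right]; ring
    have i2 : ⟪a - c, b⟫ = ⟪a, b⟫ - ⟪c, b⟫ := by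
      simp only [inner_sub_left]
    have cb : ⟪c, b⟫ = ⟪b, c⟫ := real_inner_comm b c
    have ca : ⟪c, a⟫ = ⟪a, c⟫ := real_inner_comm a c
    have ab' : ⟪a, b⟫ = ⟪b, a⟫ := real_inner_comm b a
    have sb : ⟪b, b⟫ = ‖b‖ ^ 2 := real_inner_self_eq_norm_sq b
    clear ha hb hc v1 v2 hLip hcomon hxt hx
    clear_value a b c
    refine le_of_mul_le_mul_left ?_ hγ
    have h3γ : γ * ‖b - c‖ ^ 2 ≤ γ * (L ^ 2 * γ ^ 2 * ‖b - a‖ ^ 2) :=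
      mul_le_mul_of_nonneg_left h3sq hγ.le
    have key : γ * ‖c‖ ^ 2 ≤ γ * ‖a‖ ^ 2 - (γ / 2 - 2 * L ^ 2 * γ ^ 3) * ‖b - a‖ ^ 2
        - (γ / 2 - ρ) * ‖b - c‖ ^ 2 - (γ / 2 - 2 * ρ) * ‖a - c‖ ^ 2 := by
      nlinarith [h1, h2, h3γ, e1, e2, e3, i1, i2, cb, ca, ab', sb]
    have heq : γ * (‖a‖ ^ 2 - (1 / 2 - 2 * L ^ 2 * γ ^ 2) * ‖b - a‖ ^ 2
        - (1 / 2 - ρ / γ) * ‖b - c‖ ^ 2 - (1 / 2 - 2 * ρ / γ) * ‖a - c‖ ^ 2)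
        = γ * ‖a‖ ^ 2 - (γ / 2 - 2 * L ^ 2 * γ ^ 3) * ‖b - a‖ ^ 2
        - (γ / 2 - ρ) * ‖b - c‖ ^ 2 - (γ / 2 - 2 * ρ) * ‖a - c‖ ^ 2 := by
      field_simp
    exact key.trans_eq heq.symm
  refine ⟨main, fun hγL hγρ k => ?_⟩
  have hLγ : L * γ ≤ 1 / 2 := by
    rw [le_div_iff₀ (by positivity)] at hγL
    nlinarith
  have hρ2 : ρ / γ ≤ 1 / 4 := by
    rw [div_le_iff₀ hγ]; nlinarith
  have t1 : 0 ≤ (1 / 2 - 2 * L ^ 2 * γ ^ 2) * ‖F (xt k) - F (x k)‖ ^ 2 := by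
    have : 0 ≤ 1 / 2 - 2 * L ^ 2 * γ ^ 2 := by nlinarith [mul_pos hL hγ]
    exact mul_nonneg this (sq_nonneg _)
  have t2 : 0 ≤ (1 / 2 - ρ / γ) * ‖F (xt k) - F (x (k + 1))‖ ^ 2 :=
    mul_nonneg (by linarith) (sq_nonneg _)
  have t3 : 0 ≤ (1 / 2 - 2 * ρ / γ) * ‖F (x k) - F (x (k + 1))‖ ^ 2 :=
    mul_nonneg (by rw [mul_div_assoc]; linarith) (sq_nonneg _)
  have hsq : ‖F (x (k + 1))‖ ^ 2 ≤ ‖F (x k)‖ ^ 2 := by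
    have := main k
    linarith
  nlinarith [norm_nonneg (F (x (k + 1))), norm_nonneg (F (x k)), hsq]
end

section
/- Let ρ ≥ 0, L > 0, let F : ℝ^d → ℝ^d be L-Lipschitz and ρ-negatively comonotone, with F(x*) = 0, and let (x^k), (x̃^k) be Extragradient iterates with equal stepsizes γ₁ = γ₂ = γ where 4ρ ≤ γ ≤ 1/(2L). Define the potential Φ_k = ‖x^k − x*‖² + (kγ²(1 − 5ρ/(2γ) − L²γ²) + 40γρ)‖F(x^k)‖². Then Φ_{k+1} ≤ Φ_k for every k ≥ 0. -/
open RealInnerProductSpace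

private lemma stmt12_aux1 (ρ L γ : ℝ) (hρ : 0 ≤ ρ) (hγl : 4 * ρ ≤ γ) (hγ0 : 0 ≤ γ)
    (hL2 : L ^ 2 * γ ^ 2 ≤ 1 / 4) :
    (2 * ρ * γ + 4 * ρ ^ 2 + γ ^ 2) * (L ^ 2 * γ ^ 2) + 2 * ρ * γ - γ ^ 2 ≤ -(γ ^ 2 / 16) := by
  have h1 : (0:ℝ) ≤ (γ - 4 * ρ) * (11 * γ + 4 * ρ) :=
    mul_nonneg (by linarith) (by linarith)
  have h2 : (0:ℝ) ≤ (1 / 4 - L ^ 2 * γ ^ 2) * (2 * ρ * γ + 4 * ρ ^ 2 + γ ^ 2) :=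
    mul_nonneg (by linarith) (by nlinarith [mul_nonneg hρ hγ0, sq_nonneg ρ, sq_nonneg γ])
  linarith [h1, h2]

private lemma stmt12_aux2 (ρ L γ : ℝ) (hρ : 0 ≤ ρ) (hγl : 4 * ρ ≤ γ) (hγ0 : 0 ≤ γ)
    (hL2 : L ^ 2 * γ ^ 2 ≤ 1 / 4) :
    γ ^ 2 / 8 ≤ γ ^ 2 - 5 / 2 * (ρ * γ) - L ^ 2 * γ ^ 4 := by
  have h1 : (0:ℝ) ≤ (γ - 4 * ρ) * γ := mul_nonneg (by linarith) hγ0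
  have h2 : (0:ℝ) ≤ (1 / 4 - L ^ 2 * γ ^ 2) * γ ^ 2 :=
    mul_nonneg (by linarith) (sq_nonneg γ)
  linarith [h1, h2]

set_option maxHeartbeats 1600000 in
/-- Potential decrease for Extragradient with equal stepsizes `4ρ ≤ γ ≤ 1/(2L)`
under `L`-Lipschitzness and `ρ`-negative comonotonicity:
`Φ_{k+1} ≤ Φ_k` where
`Φ_k = ‖x^k − x*‖² + (kγ²(1 − 5ρ/(2γ) − L²γ²) + 40γρ)‖F(x^k)‖²`. -/
theorem stmt_12 {d : ℕ} (ρ L : ℝ) (hρ : 0 ≤ ρ) (hL : 0 < L)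
    (F : EuclideanSpace ℝ (Fin d) → EuclideanSpace ℝ (Fin d))
    (hLip : ∀ x y, ‖F x - F y‖ ≤ L * ‖x - y‖)
    (hcomon : ∀ x y, ⟪F x - F y, x - y⟫ ≥ -ρ * ‖F x - F y‖ ^ 2)
    (xs : EuclideanSpace ℝ (Fin d)) (hxs : F xs = 0)
    (γ : ℝ) (hγl : 4 * ρ ≤ γ) (hγu : γ ≤ 1 / (2 * L))
    (x xt : ℕ → EuclideanSpace ℝ (Fin d))
    (hxt : ∀ k : ℕ, xt k = x k - γ • F (x k))
    (hx : ∀ k : ℕ, x (k + 1) = x k - γ • F (xt k))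
    (Φ : ℕ → ℝ)
    (hΦ : ∀ k : ℕ, Φ k = ‖x k - xs‖ ^ 2 +
      ((k : ℝ) * γ ^ 2 * (1 - 5 * ρ / (2 * γ) - L ^ 2 * γ ^ 2) + 40 * γ * ρ) *
        ‖F (x k)‖ ^ 2) :
    ∀ k : ℕ, Φ (k + 1) ≤ Φ k := by
  intro k
  have hγ0 : 0 ≤ γ := le_trans (by linarith) hγl
  rcases eq_or_lt_of_le hγ0 with hγz | hγpos
  · -- degenerate case γ = 0
    have hγz' : γ = 0 := hγz.symm
    have hρ0 : ρ = 0 := by linarith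
    have hxk : x (k + 1) = x k := by rw [hx k, hγz']; simp
    rw [hΦ, hΦ, hxk, hγz', hρ0]
    exact le_of_eq (by push_cast; ring)
  · -- main case γ > 0
    have hγne : γ ≠ 0 := ne_of_gt hγpos
    have hcoeff : ∀ m : ℝ, m * γ ^ 2 * (1 - 5 * ρ / (2 * γ) - L ^ 2 * γ ^ 2)
        = m * (γ ^ 2 - 5 / 2 * (ρ * γ) - L ^ 2 * γ ^ 4) := by
      intro m
      field_simp
    -- vector relations
    have hv1 : x k - xt k = γ • F (x k) := by rw [hxt k]; abel
    have hv2 : xt k - x k = -(γ • F (x k)) := by rw [hxt k]; abel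
    have hv3 : x (k + 1) - x k = -(γ • F (xt k)) := by rw [hx k]; abel
    have hv4 : x (k + 1) - xt k = γ • (F (x k) - F (xt k)) := by
      have h : x (k + 1) - xt k = (x (k + 1) - x k) - (xt k - x k) := by abel
      rw [h, hv3, hv2, smul_sub]; abel
    have hv5 : x (k + 1) - xs = (x k - xs) - γ • F (xt k) := by rw [hx k]; abel
    have hv6 : x k - xs = (xt k - xs) + γ • F (x k) := by rw [hxt k]; abel
    -- Lipschitz facts
    have hE : ‖F (x k) - F (xt k)‖ ≤ L * (γ * ‖F (x k)‖) := by
      have h := hLip (x k) (xt k)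
      rw [hv1, norm_smul, Real.norm_eq_abs, abs_of_pos hγpos] at h
      exact h
    have hG : ‖F (x (k + 1)) - F (xt k)‖ ≤ L * (γ * ‖F (x k) - F (xt k)‖) := by
      have h := hLip (x (k + 1)) (xt k)
      rw [hv4, norm_smul, Real.norm_eq_abs, abs_of_pos hγpos] at h
      exact h
    -- comonotonicity facts
    have hJ : -ρ * ‖F (xt k)‖ ^ 2 ≤ ⟪F (xt k), xt k - xs⟫ := by
      have h := hcomon (xt k) xs
      rw [hxs, sub_zero] at h
      exact h
    have hp1 : γ * ⟪F (x (k + 1)) - F (x k), F (xt k)⟫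
        ≤ ρ * ‖F (x (k + 1)) - F (x k)‖ ^ 2 := by
      have h := hcomon (x (k + 1)) (x k)
      rw [hv3, inner_neg_right, real_inner_smul_right] at h
      linarith
    have hp2 : γ * ⟪F (xt k) - F (x k), F (x k)⟫ ≤ ρ * ‖F (x k) - F (xt k)‖ ^ 2 := by
      have h := hcomon (xt k) (x k)
      rw [hv2, inner_neg_right, real_inner_smul_right, norm_sub_rev] at h
      linarith
    have hp3 : -ρ * ‖F (x (k + 1)) - F (xt k)‖ ^ 2
        ≤ γ * ⟪F (x (k + 1)) - F (xt k), F (x k) - F (xt k)⟫ := by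
      have h := hcomon (x (k + 1)) (xt k)
      rw [hv4, real_inner_smul_right] at h
      exact h
    -- expansion identities
    have e1 : ‖F (xt k)‖ ^ 2 = ‖F (x k)‖ ^ 2 + 2 * ⟪F (xt k) - F (x k), F (x k)⟫
        + ‖F (x k) - F (xt k)‖ ^ 2 := by
      have h := norm_add_sq_real (F (x k)) (F (xt k) - F (x k))
      rw [show F (x k) + (F (xt k) - F (x k)) = F (xt k) from by abel] at h
      rw [real_inner_comm (F (xt k) - F (x k)) (F (x k)), norm_sub_rev (F (xt k)) (F (x k))] at h
      exact h
    have e2 : ‖F (x (k + 1))‖ ^ 2 - ‖F (x k)‖ ^ 2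
        = 2 * ⟪F (x (k + 1)) - F (x k), F (xt k)⟫
          + ‖F (x (k + 1)) - F (xt k)‖ ^ 2 - ‖F (x k) - F (xt k)‖ ^ 2 := by
      have h1 := norm_add_sq_real (F (xt k)) (F (x (k + 1)) - F (xt k))
      rw [show F (xt k) + (F (x (k + 1)) - F (xt k)) = F (x (k + 1)) from by abel] at h1
      rw [real_inner_comm (F (x (k + 1)) - F (xt k)) (F (xt k))] at h1
      have h2 := norm_add_sq_real (F (xt k)) (F (x k) - F (xt k))
      rw [show F (xt k) + (F (x k) - F (xt k)) = F (x k) from by abel] at h2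
      rw [real_inner_comm (F (x k) - F (xt k)) (F (xt k))] at h2
      have h3 : ⟪F (x (k + 1)) - F (x k), F (xt k)⟫
          = ⟪F (x (k + 1)) - F (xt k), F (xt k)⟫ - ⟪F (x k) - F (xt k), F (xt k)⟫ := by
        rw [← inner_sub_left]
        congr 1
        abel
      linarith
    have e3 : ‖F (x (k + 1)) - F (x k)‖ ^ 2 = ‖F (x (k + 1)) - F (xt k)‖ ^ 2
        - 2 * ⟪F (x (k + 1)) - F (xt k), F (x k) - F (xt k)⟫
        + ‖F (x k) - F (xt k)‖ ^ 2 := by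
      have h := norm_sub_sq_real (F (x (k + 1)) - F (xt k)) (F (x k) - F (xt k))
      rw [show F (x (k + 1)) - F (xt k) - (F (x k) - F (xt k)) = F (x (k + 1)) - F (x k)
        from by abel] at h
      exact h
    have e4 : ‖x (k + 1) - xs‖ ^ 2
        = ‖x k - xs‖ ^ 2 - 2 * (γ * ⟪x k - xs, F (xt k)⟫) + γ ^ 2 * ‖F (xt k)‖ ^ 2 := by
      have h := norm_sub_sq_real (x k - xs) (γ • F (xt k))
      rw [← hv5, real_inner_smul_right, norm_smul, Real.norm_eq_abs] at h
      rw [h, mul_pow, sq_abs]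
    have e5 : ⟪x k - xs, F (xt k)⟫
        = ⟪F (xt k), xt k - xs⟫ + γ * ⟪F (x k), F (xt k)⟫ := by
      rw [hv6, inner_add_left, real_inner_smul_left,
        real_inner_comm (F (xt k)) (xt k - xs)]
    have e6 : ‖F (x k) - F (xt k)‖ ^ 2
        = ‖F (x k)‖ ^ 2 - 2 * ⟪F (x k), F (xt k)⟫ + ‖F (xt k)‖ ^ 2 :=
      norm_sub_sq_real (F (x k)) (F (xt k))
    -- scalar bounds
    have hLγ : L * γ ≤ 1 / 2 := by
      rw [le_div_iff₀ (by positivity : (0:ℝ) < 2 * L)] at hγu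
      linarith
    have hL2γ2 : L ^ 2 * γ ^ 2 ≤ 1 / 4 := by
      have h := pow_le_pow_left₀ (by positivity : (0:ℝ) ≤ L * γ) hLγ 2
      calc L ^ 2 * γ ^ 2 = (L * γ) ^ 2 := by ring
        _ ≤ (1 / 2) ^ 2 := h
        _ = 1 / 4 := by norm_num
    have hE2 : ‖F (x k) - F (xt k)‖ ^ 2 ≤ L ^ 2 * γ ^ 2 * ‖F (x k)‖ ^ 2 := by
      have h := pow_le_pow_left₀ (norm_nonneg (F (x k) - F (xt k))) hE 2
      calc ‖F (x k) - F (xt k)‖ ^ 2 ≤ (L * (γ * ‖F (x k)‖)) ^ 2 := h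
        _ = L ^ 2 * γ ^ 2 * ‖F (x k)‖ ^ 2 := by ring
    have hG2 : ‖F (x (k + 1)) - F (xt k)‖ ^ 2
        ≤ L ^ 2 * γ ^ 2 * ‖F (x k) - F (xt k)‖ ^ 2 := by
      have h := pow_le_pow_left₀ (norm_nonneg (F (x (k + 1)) - F (xt k))) hG 2
      calc ‖F (x (k + 1)) - F (xt k)‖ ^ 2 ≤ (L * (γ * ‖F (x k) - F (xt k)‖)) ^ 2 := h
        _ = L ^ 2 * γ ^ 2 * ‖F (x k) - F (xt k)‖ ^ 2 := by ring
    -- step 1: distance decrease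
    have s1 : ‖x (k + 1) - xs‖ ^ 2 ≤ ‖x k - xs‖ ^ 2 + 2 * γ * ρ * ‖F (xt k)‖ ^ 2
        + γ ^ 2 * ‖F (x k) - F (xt k)‖ ^ 2 - γ ^ 2 * ‖F (x k)‖ ^ 2 := by
      have e5' : γ * ⟪x k - xs, F (xt k)⟫
          = γ * ⟪F (xt k), xt k - xs⟫ + γ * (γ * ⟪F (x k), F (xt k)⟫) := by
        rw [e5]; ring
      have hJ' : γ * (-ρ * ‖F (xt k)‖ ^ 2) ≤ γ * ⟪F (xt k), xt k - xs⟫ :=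
        mul_le_mul_of_nonneg_left hJ hγ0
      have e6' : γ ^ 2 * ‖F (x k) - F (xt k)‖ ^ 2
          = γ ^ 2 * ‖F (x k)‖ ^ 2 - 2 * (γ * (γ * ⟪F (x k), F (xt k)⟫))
            + γ ^ 2 * ‖F (xt k)‖ ^ 2 := by
        rw [e6]; ring
      linarith [e4, e5', hJ', e6']
    -- step 2: operator-norm decrease
    have t1 : γ * ‖F (x (k + 1)) - F (x k)‖ ^ 2
        ≤ γ * ‖F (x (k + 1)) - F (xt k)‖ ^ 2 + 2 * ρ * ‖F (x (k + 1)) - F (xt k)‖ ^ 2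
          + γ * ‖F (x k) - F (xt k)‖ ^ 2 := by
      have e3' : γ * ‖F (x (k + 1)) - F (x k)‖ ^ 2
          = γ * ‖F (x (k + 1)) - F (xt k)‖ ^ 2
            - 2 * (γ * ⟪F (x (k + 1)) - F (xt k), F (x k) - F (xt k)⟫)
            + γ * ‖F (x k) - F (xt k)‖ ^ 2 := by
        rw [e3]; ring
      linarith [hp3, e3']
    have hmulE : ((2 * ρ * γ + 4 * ρ ^ 2 + γ ^ 2) * (L ^ 2 * γ ^ 2) + 2 * ρ * γ - γ ^ 2)
          * ‖F (x k) - F (xt k)‖ ^ 2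
        ≤ -(γ ^ 2 / 16) * ‖F (x k) - F (xt k)‖ ^ 2 :=
      mul_le_mul_of_nonneg_right (stmt12_aux1 ρ L γ hρ hγl hγ0 hL2γ2) (by positivity)
    have s2 : γ ^ 2 * (‖F (x (k + 1))‖ ^ 2 - ‖F (x k)‖ ^ 2)
        ≤ γ ^ 2 * (-(‖F (x k) - F (xt k)‖ ^ 2 / 16)) := by
      have e2' : γ ^ 2 * (‖F (x (k + 1))‖ ^ 2 - ‖F (x k)‖ ^ 2)
          = 2 * γ * (γ * ⟪F (x (k + 1)) - F (x k), F (xt k)⟫)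
            + γ ^ 2 * ‖F (x (k + 1)) - F (xt k)‖ ^ 2
            - γ ^ 2 * ‖F (x k) - F (xt k)‖ ^ 2 := by
        linear_combination (γ ^ 2) * e2
      have hp1' : 2 * γ * (γ * ⟪F (x (k + 1)) - F (x k), F (xt k)⟫)
          ≤ 2 * γ * (ρ * ‖F (x (k + 1)) - F (x k)‖ ^ 2) :=
        mul_le_mul_of_nonneg_left hp1 (by linarith)
      have t1' : 2 * ρ * (γ * ‖F (x (k + 1)) - F (x k)‖ ^ 2)
          ≤ 2 * ρ * (γ * ‖F (x (k + 1)) - F (xt k)‖ ^ 2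
            + 2 * ρ * ‖F (x (k + 1)) - F (xt k)‖ ^ 2
            + γ * ‖F (x k) - F (xt k)‖ ^ 2) :=
        mul_le_mul_of_nonneg_left t1 (by linarith)
      have hcoef : (2 * ρ * γ + 4 * ρ ^ 2 + γ ^ 2) * ‖F (x (k + 1)) - F (xt k)‖ ^ 2
          ≤ (2 * ρ * γ + 4 * ρ ^ 2 + γ ^ 2)
            * (L ^ 2 * γ ^ 2 * ‖F (x k) - F (xt k)‖ ^ 2) :=
        mul_le_mul_of_nonneg_left hG2 (by positivity)
      linarith [e2', hp1', t1', hcoef, hmulE]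
    have hBn : ‖F (x (k + 1))‖ ^ 2 - ‖F (x k)‖ ^ 2
        ≤ -(‖F (x k) - F (xt k)‖ ^ 2 / 16) :=
      le_of_mul_le_mul_left (by
        calc γ ^ 2 * (‖F (x (k + 1))‖ ^ 2 - ‖F (x k)‖ ^ 2)
            ≤ γ ^ 2 * (-(‖F (x k) - F (xt k)‖ ^ 2 / 16)) := s2) (by positivity)
    -- step 3
    have s3 : 2 * γ * ρ * ‖F (xt k)‖ ^ 2
        ≤ 5 / 2 * γ * ρ * ‖F (x k)‖ ^ 2 + γ * ρ * ‖F (x k) - F (xt k)‖ ^ 2 := by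
      have e1' : 2 * ρ * (γ * ‖F (xt k)‖ ^ 2)
          = 2 * ρ * (γ * ‖F (x k)‖ ^ 2 + 2 * (γ * ⟪F (xt k) - F (x k), F (x k)⟫)
            + γ * ‖F (x k) - F (xt k)‖ ^ 2) := by
        linear_combination (2 * ρ * γ) * e1
      have hp2' : 2 * ρ * (2 * (γ * ⟪F (xt k) - F (x k), F (x k)⟫))
          ≤ 2 * ρ * (2 * (ρ * ‖F (x k) - F (xt k)‖ ^ 2)) :=
        mul_le_mul_of_nonneg_left (by linarith) (by linarith)
      have hE2' : ‖F (x k) - F (xt k)‖ ^ 2 ≤ 1 / 4 * ‖F (x k)‖ ^ 2 := by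
        have h : (0:ℝ) ≤ (1 / 4 - L ^ 2 * γ ^ 2) * ‖F (x k)‖ ^ 2 :=
          mul_nonneg (by linarith) (by positivity)
        linarith [hE2, h]
      have h31 : 0 ≤ (γ - 4 * ρ) * ρ * ‖F (x k) - F (xt k)‖ ^ 2 :=
        mul_nonneg (mul_nonneg (by linarith) hρ) (by positivity)
      have h32 : 0 ≤ γ * ρ * (1 / 4 * ‖F (x k)‖ ^ 2 - ‖F (x k) - F (xt k)‖ ^ 2) :=
        mul_nonneg (mul_nonneg hγ0 hρ) (by linarith)
      linarith [e1', hp2', h31, h32]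
    -- rewrite Φ in polynomial form
    have hΦ1 : Φ (k + 1) = ‖x (k + 1) - xs‖ ^ 2
        + (((k : ℝ) + 1) * (γ ^ 2 - 5 / 2 * (ρ * γ) - L ^ 2 * γ ^ 4) + 40 * γ * ρ)
          * ‖F (x (k + 1))‖ ^ 2 := by
      rw [hΦ (k + 1)]
      push_cast
      rw [hcoeff]
    have hΦ0 : Φ k = ‖x k - xs‖ ^ 2
        + ((k : ℝ) * (γ ^ 2 - 5 / 2 * (ρ * γ) - L ^ 2 * γ ^ 4) + 40 * γ * ρ)
          * ‖F (x k)‖ ^ 2 := by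
      rw [hΦ k, hcoeff]
    have hP18 := stmt12_aux2 ρ L γ hρ hγl hγ0 hL2γ2
    have u1 : (((k : ℝ) + 1) * (γ ^ 2 - 5 / 2 * (ρ * γ) - L ^ 2 * γ ^ 4) + 40 * γ * ρ)
          * (‖F (x (k + 1))‖ ^ 2 - ‖F (x k)‖ ^ 2)
        ≤ 40 * γ * ρ * (-(‖F (x k) - F (xt k)‖ ^ 2 / 16)) := by
      have hPpos : (0:ℝ) ≤ γ ^ 2 - 5 / 2 * (ρ * γ) - L ^ 2 * γ ^ 4 := by
        linarith [hP18, sq_nonneg γ]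
      have hx0 : ‖F (x (k + 1))‖ ^ 2 - ‖F (x k)‖ ^ 2 ≤ 0 := by
        have h : (0:ℝ) ≤ ‖F (x k) - F (xt k)‖ ^ 2 := by positivity
        linarith [hBn]
      have hcoef : 40 * γ * ρ
          ≤ ((k : ℝ) + 1) * (γ ^ 2 - 5 / 2 * (ρ * γ) - L ^ 2 * γ ^ 4) + 40 * γ * ρ := by
        have h : (0:ℝ) ≤ ((k : ℝ) + 1) * (γ ^ 2 - 5 / 2 * (ρ * γ) - L ^ 2 * γ ^ 4) :=
          mul_nonneg (by positivity) hPpos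
        linarith
      calc (((k : ℝ) + 1) * (γ ^ 2 - 5 / 2 * (ρ * γ) - L ^ 2 * γ ^ 4) + 40 * γ * ρ)
            * (‖F (x (k + 1))‖ ^ 2 - ‖F (x k)‖ ^ 2)
          ≤ 40 * γ * ρ * (‖F (x (k + 1))‖ ^ 2 - ‖F (x k)‖ ^ 2) :=
            mul_le_mul_of_nonpos_right hcoef hx0
        _ ≤ 40 * γ * ρ * (-(‖F (x k) - F (xt k)‖ ^ 2 / 16)) :=
            mul_le_mul_of_nonneg_left hBn (by positivity)
    -- final assembly
    rw [hΦ1, hΦ0]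
    have hE2γ : γ ^ 2 * ‖F (x k) - F (xt k)‖ ^ 2
        ≤ γ ^ 2 * (L ^ 2 * γ ^ 2 * ‖F (x k)‖ ^ 2) :=
      mul_le_mul_of_nonneg_left hE2 (sq_nonneg γ)
    have hid : (((k : ℝ) + 1) * (γ ^ 2 - 5 / 2 * (ρ * γ) - L ^ 2 * γ ^ 4) + 40 * γ * ρ)
            * ‖F (x (k + 1))‖ ^ 2
          - ((k : ℝ) * (γ ^ 2 - 5 / 2 * (ρ * γ) - L ^ 2 * γ ^ 4) + 40 * γ * ρ)
            * ‖F (x k)‖ ^ 2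
        = (((k : ℝ) + 1) * (γ ^ 2 - 5 / 2 * (ρ * γ) - L ^ 2 * γ ^ 4) + 40 * γ * ρ)
            * (‖F (x (k + 1))‖ ^ 2 - ‖F (x k)‖ ^ 2)
          + (γ ^ 2 - 5 / 2 * (ρ * γ) - L ^ 2 * γ ^ 4) * ‖F (x k)‖ ^ 2 := by ring
    have hnn : (0:ℝ) ≤ γ * ρ * ‖F (x k) - F (xt k)‖ ^ 2 := by positivity
    linarith [s1, s3, hE2γ, u1, hid, hnn]
end

section
/- Let L > 0, γ₁ > 1/L, γ₂ > 0, and define F : ℝ^d → ℝ^d by F(x) = Lx. Then F is L-Lipschitz and ρ-negatively comonotone for every ρ ≥ 0, and the Extragradient iterates with stepsizes γ₁, γ₂ satisfy x^{k+1} = (1 − Lγ₂ + L²γ₁γ₂)x^k with 1 − Lγ₂ + L²γ₁γ₂ > 1; hence ‖x^{k+1}‖ > ‖x^k‖ whenever x^k ≠ 0, so EG diverges from the unique solution x* = 0 for any x⁰ ≠ 0. -/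
open RealInnerProductSpace

/-- Counter-example for Extragradient with `γ₁ > 1/L`: for `F(x) = Lx`,
`F` is `L`-Lipschitz and `ρ`-negatively comonotone for every `ρ ≥ 0`, the EG
iterates satisfy `x^{k+1} = (1 − Lγ₂ + L²γ₁γ₂)x^k` with
`1 − Lγ₂ + L²γ₁γ₂ > 1`, and `‖x^{k+1}‖ > ‖x^k‖` whenever `x^k ≠ 0`,
so EG diverges from the unique solution `x* = 0` for any `x⁰ ≠ 0`. -/
theorem stmt_14 {d : ℕ} (L γ₁ γ₂ : ℝ) (hL : 0 < L)
    (hγ₁ : γ₁ > 1 / L) (hγ₂ : 0 < γ₂)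
    (F : EuclideanSpace ℝ (Fin d) → EuclideanSpace ℝ (Fin d))
    (hF : ∀ x, F x = L • x) :
    (∀ x y, ‖F x - F y‖ ≤ L * ‖x - y‖) ∧
    (∀ ρ : ℝ, 0 ≤ ρ → ∀ x y, ⟪F x - F y, x - y⟫ ≥ -ρ * ‖F x - F y‖ ^ 2) ∧
    (1 - L * γ₂ + L ^ 2 * γ₁ * γ₂ > 1) ∧
    (∀ x xt : ℕ → EuclideanSpace ℝ (Fin d),
      (∀ k : ℕ, xt k = x k - γ₁ • F (x k)) →
      (∀ k : ℕ, x (k + 1) = x k - γ₂ • F (xt k)) →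
      ∀ k : ℕ, x (k + 1) = (1 - L * γ₂ + L ^ 2 * γ₁ * γ₂) • x k ∧
        (x k ≠ 0 → ‖x (k + 1)‖ > ‖x k‖)) := by
  have hc : 1 - L * γ₂ + L ^ 2 * γ₁ * γ₂ > 1 := by
    have h1 : L * γ₁ > 1 := by
      have := (div_lt_iff₀ hL).mp hγ₁
      nlinarith
    nlinarith [mul_pos hL hγ₂]
  refine ⟨?_, ?_, hc, ?_⟩
  · intro x y
    rw [hF, hF, ← smul_sub, norm_smul, Real.norm_eq_abs, abs_of_pos hL]
  · intro ρ hρ x y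
    rw [hF, hF, ← smul_sub, real_inner_smul_left, real_inner_self_eq_norm_sq]
    have h1 : 0 ≤ L * ‖x - y‖ ^ 2 := by positivity
    have h2 : 0 ≤ ρ * ‖L • (x - y)‖ ^ 2 := by positivity
    linarith
  · intro x xt hxt hx k
    have heq : x (k + 1) = (1 - L * γ₂ + L ^ 2 * γ₁ * γ₂) • x k := by
      rw [hx k, hF, hxt k, hF]
      module
    refine ⟨heq, fun hne => ?_⟩
    rw [heq, norm_smul, Real.norm_eq_abs, abs_of_pos (by linarith)]
    have : 0 < ‖x k‖ := norm_pos_iff.mpr hne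
    nlinarith
end

section
/- Let L > 0, 0 < γ₁ ≤ 1/L, γ₂ > 0. Let A be the 2×2 rotation matrix by angle 2π/3, i.e. with first row (−1/2, −√3/2) and second row (√3/2, −1/2), and define F : ℝ² → ℝ² by F(x) = L·A·x. Then: (i) F is L-Lipschitz; (ii) F is (1/(2L))-negatively comonotone (indeed ⟨F(x) − F(y), x − y⟩ = −(1/(2L))‖F(x) − F(y)‖²); and (iii) the Extragradient iterates with stepsizes γ₁, γ₂ satisfy ‖x^{k+1}‖² = ((1 + (γ₂L/2)(1 − γ₁L))² + (3/4)γ₂²L²(1 + γ₁L)²)‖x^k‖² > ‖x^k‖² whenever x^k ≠ 0; so EG diverges from the unique solution x* = 0 for any x⁰ ≠ 0. -/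
open RealInnerProductSpace

lemma normsq2 (v : EuclideanSpace ℝ (Fin 2)) : ‖v‖ ^ 2 = v 0 ^ 2 + v 1 ^ 2 := by
  rw [← real_inner_self_eq_norm_sq]
  simp only [PiLp.inner_apply, Fin.sum_univ_two, RCLike.inner_apply, conj_trivial]
  ring

lemma inner2 (v w : EuclideanSpace ℝ (Fin 2)) :
    ⟪v, w⟫ = v 0 * w 0 + v 1 * w 1 := by
  simp [PiLp.inner_apply, Fin.sum_univ_two, RCLike.inner_apply]
  ring

/-- Counter-example for Extragradient with `0 < γ₁ ≤ 1/L`: for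
`F(x) = L·A·x` with `A` the rotation by `2π/3`, (i) `F` is `L`-Lipschitz;
(ii) `F` is `1/(2L)`-negatively comonotone with equality; and (iii) the EG
iterates satisfy
`‖x^{k+1}‖² = ((1 + (γ₂L/2)(1−γ₁L))² + (3/4)γ₂²L²(1+γ₁L)²)‖x^k‖² > ‖x^k‖²`
whenever `x^k ≠ 0`, so EG diverges from the unique solution `x* = 0`. -/
theorem stmt_15 (L γ₁ γ₂ : ℝ) (hL : 0 < L)
    (hγ₁l : 0 < γ₁) (hγ₁u : γ₁ ≤ 1 / L) (hγ₂ : 0 < γ₂)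
    (F : EuclideanSpace ℝ (Fin 2) → EuclideanSpace ℝ (Fin 2))
    (hF : ∀ x : EuclideanSpace ℝ (Fin 2),
      F x 0 = L * (-(1 / 2) * x 0 - (Real.sqrt 3 / 2) * x 1) ∧
      F x 1 = L * ((Real.sqrt 3 / 2) * x 0 - (1 / 2) * x 1)) :
    (∀ x y, ‖F x - F y‖ ≤ L * ‖x - y‖) ∧
    (∀ x y, ⟪F x - F y, x - y⟫ = -(1 / (2 * L)) * ‖F x - F y‖ ^ 2) ∧
    (∀ x xt : ℕ → EuclideanSpace ℝ (Fin 2),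
      (∀ k : ℕ, xt k = x k - γ₁ • F (x k)) →
      (∀ k : ℕ, x (k + 1) = x k - γ₂ • F (xt k)) →
      ∀ k : ℕ,
        ‖x (k + 1)‖ ^ 2 =
          ((1 + (γ₂ * L / 2) * (1 - γ₁ * L)) ^ 2 +
            (3 / 4) * γ₂ ^ 2 * L ^ 2 * (1 + γ₁ * L) ^ 2) * ‖x k‖ ^ 2 ∧
        (x k ≠ 0 → ‖x (k + 1)‖ ^ 2 > ‖x k‖ ^ 2)) := by
  have hs : Real.sqrt 3 ^ 2 = 3 := Real.sq_sqrt (by norm_num)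
  have hL0 : L ≠ 0 := ne_of_gt hL
  have hnorm : ∀ x y, ‖F x - F y‖ ^ 2 = L ^ 2 * ‖x - y‖ ^ 2 := by
    intro x y
    rw [normsq2, normsq2]
    simp only [PiLp.sub_apply]
    rw [(hF x).1, (hF x).2, (hF y).1, (hF y).2]
    linear_combination (L ^ 2 * ((x 0 - y 0) ^ 2 + (x 1 - y 1) ^ 2) / 4) * hs
  refine ⟨?_, ?_, ?_⟩
  · intro x y
    have h1 := hnorm x y
    have h2 : 0 ≤ L * ‖x - y‖ := by positivity
    nlinarith [norm_nonneg (F x - F y), norm_nonneg (x - y)]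
  · intro x y
    have hinner : ⟪F x - F y, x - y⟫ = -(L / 2) * ‖x - y‖ ^ 2 := by
      rw [inner2, normsq2]
      simp only [PiLp.sub_apply]
      rw [(hF x).1, (hF x).2, (hF y).1, (hF y).2]
      ring
    rw [hinner, hnorm]
    field_simp
  · intro x xt h1 h2 k
    have ht0 : xt k 0 = x k 0 - γ₁ * F (x k) 0 := by
      rw [h1]; simp [PiLp.sub_apply, PiLp.smul_apply, smul_eq_mul]
    have ht1 : xt k 1 = x k 1 - γ₁ * F (x k) 1 := by
      rw [h1]; simp [PiLp.sub_apply, PiLp.smul_apply, smul_eq_mul]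
    have hx0 : x (k + 1) 0 = x k 0 - γ₂ * F (xt k) 0 := by
      rw [h2]; simp [PiLp.sub_apply, PiLp.smul_apply, smul_eq_mul]
    have hx1 : x (k + 1) 1 = x k 1 - γ₂ * F (xt k) 1 := by
      rw [h2]; simp [PiLp.sub_apply, PiLp.smul_apply, smul_eq_mul]
    have key : ‖x (k + 1)‖ ^ 2 =
        ((1 + (γ₂ * L / 2) * (1 - γ₁ * L)) ^ 2 +
          (3 / 4) * γ₂ ^ 2 * L ^ 2 * (1 + γ₁ * L) ^ 2) * ‖x k‖ ^ 2 := by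
      rw [normsq2, normsq2, hx0, hx1, (hF (xt k)).1, (hF (xt k)).2, ht0, ht1,
        (hF (x k)).1, (hF (x k)).2]
      linear_combination (((x k 0) ^ 2 + (x k 1) ^ 2) *
        (γ₂ ^ 2 * L ^ 2 * (1 + γ₁ * L) ^ 2 / 4 - γ₂ * L ^ 2 * γ₁ / 2
          - γ₂ ^ 2 * L ^ 3 * γ₁ / 4
          + γ₂ ^ 2 * L ^ 4 * γ₁ ^ 2 * (Real.sqrt 3 ^ 2 + 1) / 16)) * hs
    refine ⟨key, fun hne => ?_⟩
    have hX : 0 < ‖x k‖ ^ 2 := pow_pos (norm_pos_iff.mpr hne) 2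
    have hc1 : γ₁ * L ≤ 1 := by
      rw [le_div_iff₀ hL] at hγ₁u; linarith
    have ht0 : 0 ≤ γ₂ * L / 2 * (1 - γ₁ * L) := by
      have : 0 < γ₂ * L := mul_pos hγ₂ hL
      nlinarith
    have hq : 0 < (3 / 4) * γ₂ ^ 2 * L ^ 2 * (1 + γ₁ * L) ^ 2 := by
      have h1 : 0 < 1 + γ₁ * L := by nlinarith [mul_pos hγ₁l hL]
      positivity
    have hC : 1 < (1 + (γ₂ * L / 2) * (1 - γ₁ * L)) ^ 2 +
        (3 / 4) * γ₂ ^ 2 * L ^ 2 * (1 + γ₁ * L) ^ 2 := by nlinarith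
    calc ‖x k‖ ^ 2 = 1 * ‖x k‖ ^ 2 := (one_mul _).symm
      _ < _ := by rw [key]; exact mul_lt_mul_of_pos_right hC hX
end

section
/- Let ρ ≥ 0, let F : ℝ^d → ℝ^d be ρ-star-negatively comonotone with respect to x* with F(x*) = 0, and let (x^k), (x̃^k) be Optimistic Gradient iterates with stepsizes γ₁, γ₂ > 0. Then for every k ≥ 1: ‖x^{k+1} − x*‖² ≤ ‖x^k − x*‖² − γ₂(γ₁ − 2ρ − γ₂)‖F(x̃^k)‖² − γ₁γ₂‖F(x̃^{k−1})‖² + γ₁γ₂‖F(x̃^k) − F(x̃^{k−1})‖². -/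
open RealInnerProductSpace

/-- Key one-step inequality for Optimistic Gradient under
`ρ`-star-negative comonotonicity: for all `k ≥ 1`,
`‖x^{k+1} − x*‖² ≤ ‖x^k − x*‖² − γ₂(γ₁ − 2ρ − γ₂)‖F(x̃^k)‖²
  − γ₁γ₂‖F(x̃^{k−1})‖² + γ₁γ₂‖F(x̃^k) − F(x̃^{k−1})‖²`. -/
theorem stmt_16 {d : ℕ} (ρ : ℝ) (hρ : 0 ≤ ρ)
    (F : EuclideanSpace ℝ (Fin d) → EuclideanSpace ℝ (Fin d))
    (xs : EuclideanSpace ℝ (Fin d)) (hxs : F xs = 0)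
    (hstar : ∀ x, ⟪F x, x - xs⟫ ≥ -ρ * ‖F x‖ ^ 2)
    (γ₁ γ₂ : ℝ) (hγ₁ : 0 < γ₁) (hγ₂ : 0 < γ₂)
    (x xt : ℕ → EuclideanSpace ℝ (Fin d))
    (hxt0 : xt 0 = x 0)
    (hxt : ∀ k : ℕ, xt (k + 1) = x (k + 1) - γ₁ • F (xt k))
    (hx : ∀ k : ℕ, x (k + 1) = x k - γ₂ • F (xt k)) :
    ∀ k : ℕ, 1 ≤ k →
      ‖x (k + 1) - xs‖ ^ 2 ≤ ‖x k - xs‖ ^ 2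
        - γ₂ * (γ₁ - 2 * ρ - γ₂) * ‖F (xt k)‖ ^ 2
        - γ₁ * γ₂ * ‖F (xt (k - 1))‖ ^ 2
        + γ₁ * γ₂ * ‖F (xt k) - F (xt (k - 1))‖ ^ 2 := by
  rintro k hk
  obtain ⟨m, rfl⟩ : ∃ m, k = m + 1 := ⟨k - 1, (Nat.succ_pred_eq_of_pos hk).symm⟩
  simp only [Nat.add_sub_cancel]
  set a := x (m + 1) - xs with ha
  set f := F (xt (m + 1)) with hf
  set g := F (xt m) with hg
  have hstep : x (m + 2) - xs = a - γ₂ • f := by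
    rw [hx (m + 1), ha]; abel
  have hxts : xt (m + 1) - xs = a - γ₁ • g := by
    rw [hxt m, ha]; abel
  have hs := hstar (xt (m + 1))
  rw [hxts] at hs
  have hs' : ⟪f, a⟫ - γ₁ * ⟪f, g⟫ ≥ -ρ * ‖f‖ ^ 2 := by
    rwa [inner_sub_right, real_inner_smul_right] at hs
  have e1 : ‖x (m + 2) - xs‖ ^ 2 = ‖a‖ ^ 2 - 2 * γ₂ * ⟪f, a⟫ + γ₂ ^ 2 * ‖f‖ ^ 2 := by
    rw [hstep, @norm_sub_sq_real, real_inner_smul_right, norm_smul, Real.norm_eq_abs,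
      abs_of_pos hγ₂, real_inner_comm]
    ring
  have e2 : ‖f - g‖ ^ 2 = ‖f‖ ^ 2 - 2 * ⟪f, g⟫ + ‖g‖ ^ 2 := by
    rw [@norm_sub_sq_real]; try ring
  rw [e1, e2]
  nlinarith [mul_le_mul_of_nonneg_left hs' (by positivity : (0:ℝ) ≤ 2 * γ₂)]
end

section
/- Let ρ ≥ 0, L > 0, let F : ℝ^d → ℝ^d be L-Lipschitz and ρ-star-negatively comonotone with respect to x* with F(x*) = 0, and suppose ρ < 1/(2L), 2ρ < γ₁ < 1/L, and 0 < γ₂ < min{1/L − γ₁, γ₁ − 2ρ}. Then the Optimistic Gradient iterates with stepsizes γ₁, γ₂ satisfy, for every N ≥ 0: (1/(N+1)) ∑_{k=0}^{N} ‖F(x̃^k)‖² ≤ ‖x⁰ − x*‖² / (γ₁γ₂(1 − L²(γ₁ + γ₂)²)(N+1)). -/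
open Filter Finset

set_option maxHeartbeats 2000000 in
/-- Scalar telescoping core of the OG best-iterate analysis. -/
lemma og_scalar (ρ L a b : ℝ) (Nn R D : ℕ → ℝ)
    (hρ : 0 ≤ ρ) (hL : 0 < L) (ha : 0 < a) (hb : 0 < b)
    (hu : L * (a + b) < 1) (hab : 2 * ρ + b < a)
    (hN0 : ∀ k, 0 ≤ Nn k) (hR0 : ∀ k, 0 ≤ R k) (hD0 : ∀ k, 0 ≤ D k)
    (hM0 : R 1 ≤ R 0 + (2 * ρ * b + b ^ 2) * Nn 0)
    (hMR : ∀ k, R (k + 2) ≤ R (k + 1) + (2 * ρ * b + b ^ 2) * Nn (k + 1)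
        - a * b * (Nn (k + 1) + Nn k - D k))
    (hS0 : D 0 ≤ L ^ 2 * (a + b) ^ 2 * Nn 0)
    (hSR : ∀ k, D (k + 1) ≤ (a + b) * b * L ^ 2 * Nn (k + 1) - a * b * L ^ 2 * Nn k
        + a * (a + b) * L ^ 2 * D k)
    (hL0 : Nn 0 ≤ L ^ 2 * R 0) :
    ∀ N : ℕ, a * b * (1 - L ^ 2 * (a + b) ^ 2) * (∑ k ∈ Finset.range (N + 1), Nn k) ≤ R 0 := by
  intro N
  have hupos : 0 < L * (a + b) := by positivity
  have hu2 : L * (a + b) * (L * (a + b)) < 1 := by nlinarith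
  have hbu : 0 ≤ b * (a + b) * L ^ 2 := by positivity
  have hA1 : a * (a + b) * L ^ 2 < 1 := by nlinarith
  have hApos : 0 < a * (a + b) * L ^ 2 := by positivity
  have h1A : 0 < 1 - a * (a + b) * L ^ 2 := by linarith
  have h1u2 : 0 < 1 - L ^ 2 * (a + b) ^ 2 := by nlinarith
  set τ3 : ℝ := a * b / (1 - a * (a + b) * L ^ 2) with hτ3def
  have hτ3pos : 0 < τ3 := by
    rw [hτ3def]; positivity
  have hτ3eq : τ3 * (1 - a * (a + b) * L ^ 2) = a * b := by
    rw [hτ3def]; field_simp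
  set τ2 : ℝ := a * b - 2 * ρ * b - b ^ 2 - τ3 * ((a + b) * b * L ^ 2) with hτ2def
  set T : ℝ := a * b + τ2 + τ3 * (a * b * L ^ 2) with hTdef
  set θ2 : ℝ := a * b - τ3 * ((a + b) * b * L ^ 2) with hθ2def
  set θ3 : ℝ := τ3 * (a * (a + b) * L ^ 2) with hθ3def
  set Tc : ℝ := θ2 + τ3 * (a * b * L ^ 2) with hTcdef
  have hθ2nn : 0 ≤ θ2 := by
    have h : (a + b) * b * L ^ 2 ≤ 1 - a * (a + b) * L ^ 2 := by nlinarith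
    have h2 : τ3 * ((a + b) * b * L ^ 2) ≤ τ3 * (1 - a * (a + b) * L ^ 2) :=
      mul_le_mul_of_nonneg_left h hτ3pos.le
    rw [hθ2def]; linarith [hτ3eq]
  have hθ3nn : 0 ≤ θ3 := by rw [hθ3def]; positivity
  have hTcpos : 0 < Tc := by
    have : 0 < τ3 * (a * b * L ^ 2) := by positivity
    rw [hTcdef]; linarith
  -- refined per-step
  have hWstep : ∀ m : ℕ,
      R (m + 2) + τ2 * Nn (m + 1) + τ3 * D (m + 1)
        ≤ R (m + 1) + τ2 * Nn m + τ3 * D m - T * Nn m := by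
    intro m
    have h1 := hMR m
    have h2 := mul_le_mul_of_nonneg_left (hSR m) hτ3pos.le
    have h3 : τ3 * (1 - a * (a + b) * L ^ 2) * D m = a * b * D m := by
      rw [hτ3eq]
    rw [hTdef, hτ2def]
    linarith [h1, h2, h3]
  -- crude per-step
  have hPstep : ∀ m : ℕ,
      R (m + 3) + θ2 * Nn (m + 1) + θ3 * D (m + 1)
        ≤ R (m + 2) + θ2 * Nn m + θ3 * D m - Tc * Nn m := by
    intro m
    have h1 := hMR (m + 1)
    have h2 := mul_le_mul_of_nonneg_left (hSR m) hτ3pos.le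
    have h3 : τ3 * (1 - a * (a + b) * L ^ 2) * D (m + 1) = a * b * D (m + 1) := by
      rw [hτ3eq]
    have h5 : (2 * ρ * b + b ^ 2 - a * b) * Nn (m + 2) ≤ 0 := by
      apply mul_nonpos_of_nonpos_of_nonneg _ (hN0 (m + 2))
      nlinarith
    rw [hTcdef, hθ2def, hθ3def]
    linarith [h1, h2, h3, h5]
  -- crude base
  have hPbase : R 2 + θ2 * Nn 0 + θ3 * D 0
      ≤ R 0 + (2 * ρ * b + b ^ 2 + θ3) * Nn 0 := by
    have h1 := hMR 0
    have h2 := mul_le_mul_of_nonneg_left hS0 hτ3pos.le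
    have h3 : τ3 * (1 - a * (a + b) * L ^ 2) * D 0 = a * b * D 0 := by
      rw [hτ3eq]
    have h5 : (2 * ρ * b + b ^ 2 - a * b) * Nn 1 ≤ 0 := by
      apply mul_nonpos_of_nonpos_of_nonneg _ (hN0 1)
      nlinarith
    rw [hθ2def, hθ3def]
    linarith [h1, h2, h3, h5, hM0]
  -- crude telescope
  have hPtel : ∀ m : ℕ, Tc * (∑ k ∈ Finset.range m, Nn k)
      + (R (m + 2) + θ2 * Nn m + θ3 * D m) ≤ R 2 + θ2 * Nn 0 + θ3 * D 0 := by
    intro m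
    induction m with
    | zero => simp
    | succ n ih =>
        rw [Finset.sum_range_succ]
        have := hPstep n
        linarith
  have hC : ∀ m : ℕ, ∑ k ∈ Finset.range m, Nn k
      ≤ (R 0 + (2 * ρ * b + b ^ 2 + θ3) * Nn 0) / Tc := by
    intro m
    rw [le_div_iff₀ hTcpos]
    have h1 := hPtel m
    have h2 : 0 ≤ R (m + 2) + θ2 * Nn m + θ3 * D m := by
      have := hR0 (m + 2)
      have := mul_nonneg hθ2nn (hN0 m)
      have := mul_nonneg hθ3nn (hD0 m)
      linarith
    linarith [hPbase]
  have hsummable : Summable Nn := summable_of_sum_range_le hN0 hC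
  have hNlim : Tendsto Nn atTop (nhds 0) := hsummable.tendsto_atTop_zero
  -- refined telescope
  have hWtel : ∀ m : ℕ, T * (∑ k ∈ Finset.range m, Nn k)
      + (R (m + 1) + τ2 * Nn m + τ3 * D m) ≤ R 1 + τ2 * Nn 0 + τ3 * D 0 := by
    intro m
    induction m with
    | zero => simp
    | succ n ih =>
        rw [Finset.sum_range_succ]
        have := hWstep n
        linarith
  have hW0 : R 1 + τ2 * Nn 0 + τ3 * D 0 ≤ R 0 + τ3 * Nn 0 := by
    have h2 : τ3 * D 0 ≤ τ3 * (L ^ 2 * (a + b) ^ 2 * Nn 0) :=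
      mul_le_mul_of_nonneg_left hS0 hτ3pos.le
    have h3 : τ3 * (1 - a * (a + b) * L ^ 2) * Nn 0 = a * b * Nn 0 := by
      rw [hτ3eq]
    rw [hτ2def]
    linarith [hM0, h2, h3]
  -- T lower bound
  have hTineq : a * b * (1 - L ^ 2 * (a + b) ^ 2) * (1 + τ3 * L ^ 2) ≤ T := by
    have key2 : (T - a * b * (1 - L ^ 2 * (a + b) ^ 2) * (1 + τ3 * L ^ 2))
        * (1 - a * (a + b) * L ^ 2)
        = b * (a - 2 * ρ - b) * (1 - a * (a + b) * L ^ 2)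
          + a * b * ((a * (a + b) * L ^ 2) * (1 - L ^ 2 * (a + b) ^ 2)
            + a * b * L ^ 2 * (L ^ 2 * (a + b) ^ 2)) := by
      rw [hTdef, hτ2def]
      linear_combination (- (b ^ 2 * L ^ 2) - a * b * (1 - L ^ 2 * (a + b) ^ 2) * L ^ 2) * hτ3eq
    have h1 : 0 ≤ b * (a - 2 * ρ - b) * (1 - a * (a + b) * L ^ 2) := by
      apply mul_nonneg (mul_nonneg hb.le (by linarith)) h1A.le
    have h2 : 0 ≤ a * b * ((a * (a + b) * L ^ 2) * (1 - L ^ 2 * (a + b) ^ 2)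
        + a * b * L ^ 2 * (L ^ 2 * (a + b) ^ 2)) := by
      have h2a : 0 ≤ (a * (a + b) * L ^ 2) * (1 - L ^ 2 * (a + b) ^ 2) :=
        mul_nonneg hApos.le h1u2.le
      have h2b : 0 ≤ a * b * L ^ 2 * (L ^ 2 * (a + b) ^ 2) := by positivity
      have := mul_pos ha hb
      nlinarith
    nlinarith [key2, h1, h2, h1A]
  have hTpos : 0 < T := by
    have : 0 < a * b * (1 - L ^ 2 * (a + b) ^ 2) * (1 + τ3 * L ^ 2) := by positivity
    linarith
  -- main limit argument
  set Sfin : ℝ := ∑ k ∈ Finset.range (N + 1), Nn k with hSfin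
  have hSnn : 0 ≤ Sfin := Finset.sum_nonneg fun k _ => hN0 k
  have hmono : ∀ m : ℕ, N + 1 ≤ m →
      T * Sfin ≤ R 0 + τ3 * Nn 0 - τ2 * Nn m := by
    intro m hm
    have hsub : Sfin ≤ ∑ k ∈ Finset.range m, Nn k := by
      rw [hSfin]
      apply Finset.sum_le_sum_of_subset_of_nonneg (Finset.range_subset_range.2 hm)
      intro k _ _; exact hN0 k
    have h1 := hWtel m
    have h2 : τ2 * Nn m ≤ R (m + 1) + τ2 * Nn m + τ3 * D m := by
      have := hR0 (m + 1)
      have := mul_nonneg hτ3pos.le (hD0 m)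
      linarith
    have h3 : T * Sfin ≤ T * ∑ k ∈ Finset.range m, Nn k :=
      mul_le_mul_of_nonneg_left hsub hTpos.le
    linarith [hW0]
  have hlim : Tendsto (fun m => R 0 + τ3 * Nn 0 - τ2 * Nn m) atTop
      (nhds (R 0 + τ3 * Nn 0 - τ2 * 0)) :=
    tendsto_const_nhds.sub (tendsto_const_nhds.mul hNlim)
  have hfinal : T * Sfin ≤ R 0 + τ3 * Nn 0 := by
    have := ge_of_tendsto hlim (eventually_atTop.2 ⟨N + 1, hmono⟩)
    simpa using this
  have hfin2 : T * Sfin ≤ (1 + τ3 * L ^ 2) * R 0 := by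
    have h := mul_le_mul_of_nonneg_left hL0 hτ3pos.le
    nlinarith [h, hfinal]
  have h5 : a * b * (1 - L ^ 2 * (a + b) ^ 2) * (1 + τ3 * L ^ 2) * Sfin
      ≤ (1 + τ3 * L ^ 2) * R 0 :=
    le_trans (mul_le_mul_of_nonneg_right hTineq hSnn) hfin2
  have hfac : 0 < 1 + τ3 * L ^ 2 := by positivity
  have h7 : (1 + τ3 * L ^ 2) * (a * b * (1 - L ^ 2 * (a + b) ^ 2) * Sfin)
      ≤ (1 + τ3 * L ^ 2) * R 0 := by linarith [h5]
  exact le_of_mul_le_mul_left h7 hfac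

open RealInnerProductSpace

section helpers
variable {E : Type*} [NormedAddCommGroup E] [InnerProductSpace ℝ E]

lemma og_sq_expand (p q : E) (t : ℝ) :
    ‖p - t • q‖ ^ 2 = ‖p‖ ^ 2 - 2 * t * ⟪q, p⟫ + t ^ 2 * ‖q‖ ^ 2 := by
  rw [norm_sub_sq_real, real_inner_smul_right, norm_smul, mul_pow, real_inner_comm]
  simp [Real.norm_eq_abs, sq_abs]
  ring

lemma og_polar (p q : E) :
    2 * ⟪p, q⟫ = ‖p‖ ^ 2 + ‖q‖ ^ 2 - ‖p - q‖ ^ 2 := by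
  have := norm_sub_sq_real p q
  linarith

end helpers

set_option maxHeartbeats 1000000 in
/-- Best-iterate `O(1/N)` rate for Optimistic Gradient under `L`-Lipschitzness
and `ρ`-star-negative comonotonicity, with `ρ < 1/(2L)`, `2ρ < γ₁ < 1/L`, and
`0 < γ₂ < min{1/L − γ₁, γ₁ − 2ρ}`:
`(1/(N+1)) ∑_{k=0}^N ‖F(x̃^k)‖² ≤ ‖x⁰ − x*‖²/(γ₁γ₂(1 − L²(γ₁+γ₂)²)(N+1))`. -/
theorem stmt_17 {d : ℕ} (ρ L : ℝ) (hρ : 0 ≤ ρ) (hL : 0 < L)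
    (F : EuclideanSpace ℝ (Fin d) → EuclideanSpace ℝ (Fin d))
    (hLip : ∀ x y, ‖F x - F y‖ ≤ L * ‖x - y‖)
    (xs : EuclideanSpace ℝ (Fin d)) (hxs : F xs = 0)
    (hstar : ∀ x, ⟪F x, x - xs⟫ ≥ -ρ * ‖F x‖ ^ 2)
    (hρL : ρ < 1 / (2 * L))
    (γ₁ γ₂ : ℝ) (hγ₁l : 2 * ρ < γ₁) (hγ₁u : γ₁ < 1 / L)
    (hγ₂l : 0 < γ₂) (hγ₂u : γ₂ < min (1 / L - γ₁) (γ₁ - 2 * ρ))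
    (x xt : ℕ → EuclideanSpace ℝ (Fin d))
    (hxt0 : xt 0 = x 0)
    (hxt : ∀ k : ℕ, xt (k + 1) = x (k + 1) - γ₁ • F (xt k))
    (hx : ∀ k : ℕ, x (k + 1) = x k - γ₂ • F (xt k)) :
    ∀ N : ℕ,
      (1 / ((N : ℝ) + 1)) * ∑ k ∈ Finset.range (N + 1), ‖F (xt k)‖ ^ 2 ≤
        ‖x 0 - xs‖ ^ 2 /
          (γ₁ * γ₂ * (1 - L ^ 2 * (γ₁ + γ₂) ^ 2) * ((N : ℝ) + 1)) := by
  intro N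
  have ha : 0 < γ₁ := by linarith
  have hbound := lt_min_iff.mp hγ₂u
  have hu : L * (γ₁ + γ₂) < 1 := by
    have h1 : γ₁ + γ₂ < 1 / L := by linarith [hbound.1]
    have := (lt_div_iff₀ hL).mp h1
    linarith
  have hab : 2 * ρ + γ₂ < γ₁ := by linarith [hbound.2]
  -- sequences
  set g : ℕ → EuclideanSpace ℝ (Fin d) := fun k => F (xt k) with hgdef
  have hgk : ∀ k, F (xt k) = g k := fun k => rfl
  -- vector identities
  have hyrec : ∀ k, x (k + 1) - xs = (x k - xs) - γ₂ • g k := by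
    intro k; rw [hx k]; module
  have hxty : ∀ k, x (k + 1) - xs = (xt (k + 1) - xs) + γ₁ • g k := by
    intro k; rw [hxt k]; module
  have hdiff : ∀ k, xt (k + 2) - xt (k + 1)
      = -(γ₂ • g (k + 1) + γ₁ • (g (k + 1) - g k)) := by
    intro k
    have e1 : xt (k + 2) = x (k + 2) - γ₁ • g (k + 1) := hxt (k + 1)
    have e2 : xt (k + 1) = x (k + 1) - γ₁ • g k := hxt k
    have e3 : x (k + 2) = x (k + 1) - γ₂ • g (k + 1) := hx (k + 1)
    rw [e1, e3, e2]
    module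
  have hdiff0 : xt 1 - xt 0 = -((γ₁ + γ₂) • g 0) := by
    have e1 : xt 1 = x 1 - γ₁ • g 0 := hxt 0
    have e3 : x 1 = x 0 - γ₂ • g 0 := hx 0
    rw [e1, e3, hxt0]
    module
  -- scalar sequences
  have key := og_scalar ρ L γ₁ γ₂ (fun k => ‖g k‖ ^ 2) (fun k => ‖x k - xs‖ ^ 2)
    (fun k => ‖g (k + 1) - g k‖ ^ 2) hρ hL ha hγ₂l hu hab
    (fun k => by positivity) (fun k => by positivity) (fun k => by positivity)
    ?_ ?_ ?_ ?_ ?_ N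
  · -- final conversion
    have hc : 0 < γ₁ * γ₂ * (1 - L ^ 2 * (γ₁ + γ₂) ^ 2) := by
      have hu2 : L ^ 2 * (γ₁ + γ₂) ^ 2 < 1 := by nlinarith [mul_pos hL (by linarith : (0:ℝ) < γ₁ + γ₂)]
      have : 0 < 1 - L ^ 2 * (γ₁ + γ₂) ^ 2 := by linarith
      positivity
    have hN1 : (0:ℝ) < (N : ℝ) + 1 := by positivity
    rw [show (1 / ((N:ℝ) + 1)) * ∑ k ∈ Finset.range (N + 1), ‖F (xt k)‖ ^ 2
        = (∑ k ∈ Finset.range (N + 1), ‖F (xt k)‖ ^ 2) / ((N:ℝ) + 1) from by ring]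
    rw [div_le_div_iff₀ hN1 (by positivity)]
    simp only [hgk] at key ⊢
    nlinarith [mul_le_mul_of_nonneg_right key hN1.le]
  · -- hM0
    have h1 : ‖x 1 - xs‖ ^ 2 = ‖x 0 - xs‖ ^ 2 - 2 * γ₂ * ⟪g 0, x 0 - xs⟫
        + γ₂ ^ 2 * ‖g 0‖ ^ 2 := by
      rw [hyrec 0]; exact og_sq_expand _ _ _
    have h2 : ⟪g 0, xt 0 - xs⟫ ≥ -ρ * ‖g 0‖ ^ 2 := hstar (xt 0)
    rw [hxt0] at h2
    have h3 := mul_le_mul_of_nonneg_left h2 (by linarith : (0:ℝ) ≤ 2 * γ₂)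
    linarith [h1, h3]
  · -- hMR
    intro k
    have h1 : ‖x (k + 2) - xs‖ ^ 2 = ‖x (k + 1) - xs‖ ^ 2
        - 2 * γ₂ * ⟪g (k + 1), x (k + 1) - xs⟫ + γ₂ ^ 2 * ‖g (k + 1)‖ ^ 2 := by
      rw [hyrec (k + 1)]; exact og_sq_expand _ _ _
    have h2 : ⟪g (k + 1), x (k + 1) - xs⟫
        = ⟪g (k + 1), xt (k + 1) - xs⟫ + γ₁ * ⟪g (k + 1), g k⟫ := by
      rw [hxty k, inner_add_right, real_inner_smul_right]
    have h3 := mul_le_mul_of_nonneg_left (hstar (xt (k + 1)))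
      (by linarith : (0:ℝ) ≤ 2 * γ₂)
    have h4 : γ₁ * γ₂ * (2 * ⟪g (k + 1), g k⟫)
        = γ₁ * γ₂ * (‖g (k + 1)‖ ^ 2 + ‖g k‖ ^ 2 - ‖g (k + 1) - g k‖ ^ 2) := by
      rw [og_polar]
    have h5 : 2 * γ₂ * ⟪g (k + 1), x (k + 1) - xs⟫
        = 2 * γ₂ * ⟪g (k + 1), xt (k + 1) - xs⟫
          + γ₁ * γ₂ * (2 * ⟪g (k + 1), g k⟫) := by
      rw [h2]; ring
    linarith [h1, h3, h4, h5]
  · -- hS0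
    have hlip := hLip (xt 1) (xt 0)
    have h1 : ‖g 1 - g 0‖ ^ 2 ≤ (L * ‖xt 1 - xt 0‖) ^ 2 :=
      pow_le_pow_left₀ (norm_nonneg _) hlip 2
    rw [hdiff0, norm_neg, norm_smul] at h1
    simp only [Real.norm_eq_abs] at h1
    calc ‖g (0 + 1) - g 0‖ ^ 2 = ‖g 1 - g 0‖ ^ 2 := by norm_num
      _ ≤ (L * (|γ₁ + γ₂| * ‖g 0‖)) ^ 2 := h1
      _ = L ^ 2 * (γ₁ + γ₂) ^ 2 * ‖g 0‖ ^ 2 := by rw [mul_pow, mul_pow, sq_abs]; ring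
  · -- hSR
    intro k
    have hlip := hLip (xt (k + 2)) (xt (k + 1))
    have h1 : ‖g (k + 2) - g (k + 1)‖ ^ 2 ≤ (L * ‖xt (k + 2) - xt (k + 1)‖) ^ 2 :=
      pow_le_pow_left₀ (norm_nonneg _) hlip 2
    rw [hdiff k, norm_neg] at h1
    have h2 : ‖γ₂ • g (k + 1) + γ₁ • (g (k + 1) - g k)‖ ^ 2
        = γ₂ ^ 2 * ‖g (k + 1)‖ ^ 2
          + 2 * γ₂ * γ₁ * ⟪g (k + 1), g (k + 1) - g k⟫
          + γ₁ ^ 2 * ‖g (k + 1) - g k‖ ^ 2 := by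
      rw [norm_add_sq_real, real_inner_smul_left, real_inner_smul_right,
        norm_smul, norm_smul]
      simp only [Real.norm_eq_abs]
      rw [mul_pow, mul_pow, sq_abs, sq_abs]
      ring
    have h3 : γ₂ * γ₁ * (2 * ⟪g (k + 1), g (k + 1) - g k⟫)
        = γ₂ * γ₁ * (‖g (k + 1)‖ ^ 2 + ‖g (k + 1) - g k‖ ^ 2
          - ‖g (k + 1) - (g (k + 1) - g k)‖ ^ 2) := by
      rw [og_polar]
    have h4 : g (k + 1) - (g (k + 1) - g k) = g k := by module
    rw [h4] at h3
    have h5 : (L * ‖γ₂ • g (k + 1) + γ₁ • (g (k + 1) - g k)‖) ^ 2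
        = L ^ 2 * ‖γ₂ • g (k + 1) + γ₁ • (g (k + 1) - g k)‖ ^ 2 := by
      rw [mul_pow]
    nlinarith [h1, h2, h3, h5, sq_nonneg L]
  · -- hL0
    have hlip := hLip (xt 0) xs
    rw [hxs, sub_zero] at hlip
    have h0 : ‖g 0‖ ≤ L * ‖x 0 - xs‖ := by rw [← hxt0]; exact hlip
    have h1 : ‖g 0‖ ^ 2 ≤ (L * ‖x 0 - xs‖) ^ 2 :=
      pow_le_pow_left₀ (norm_nonneg _) h0 2
    calc ‖g 0‖ ^ 2 ≤ (L * ‖x 0 - xs‖) ^ 2 := h1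
      _ = L ^ 2 * ‖x 0 - xs‖ ^ 2 := by rw [mul_pow]
end

section
/- Let L > 0, let F : ℝ^d → ℝ^d be L-Lipschitz and ρ-negatively comonotone with ρ ≤ 5/(62L), and let (x^k), (x̃^k) be Optimistic Gradient iterates with equal stepsizes γ₁ = γ₂ = γ where 4ρ ≤ γ ≤ 10/(31L). Then for every k ≥ 1: ‖F(x^{k+1})‖² + ‖F(x^{k+1}) − F(x̃^k)‖² ≤ ‖F(x^k)‖² + ‖F(x^k) − F(x̃^{k−1})‖² − (1/100)‖F(x̃^k) − F(x̃^{k−1})‖². -/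
open RealInnerProductSpace

private lemma key_ineq {d : ℕ} (a b c e : EuclideanSpace ℝ (Fin d))
    (h1 : ‖a - b‖ ^ 2 ≤ (100 / 961) * ‖b - e‖ ^ 2)
    (h4 : ⟪a - b, e - b⟫ ≥ -(1 / 4) * ‖a - b‖ ^ 2)
    (h6 : ⟪a - c, b⟫ ≤ (1 / 4) * ‖a - c‖ ^ 2) :
    ‖a‖ ^ 2 + ‖a - b‖ ^ 2 ≤ ‖c‖ ^ 2 + ‖c - e‖ ^ 2 - (1 / 100) * ‖b - e‖ ^ 2 := by
  have s1 : (0:ℝ) ≤ ‖(7:ℝ) • a - (11:ℝ) • b + (10:ℝ) • c - (6:ℝ) • e‖ ^ 2 := by positivity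
  have s2 : (0:ℝ) ≤ ‖(42743:ℝ) • b - (144150:ℝ) • c + (101407:ℝ) • e‖ ^ 2 := by positivity
  have s3 : (0:ℝ) ≤ ‖c - e‖ ^ 2 := by positivity
  have cab : ⟪a, b⟫ = ⟪b, a⟫ := real_inner_comm b a
  have cac : ⟪a, c⟫ = ⟪c, a⟫ := real_inner_comm c a
  have cae : ⟪a, e⟫ = ⟪e, a⟫ := real_inner_comm e a
  have cbc : ⟪b, c⟫ = ⟪c, b⟫ := real_inner_comm c b
  have cbe : ⟪b, e⟫ = ⟪e, b⟫ := real_inner_comm e b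
  have cce : ⟪c, e⟫ = ⟪e, c⟫ := real_inner_comm e c
  simp only [← real_inner_self_eq_norm_sq, inner_sub_left, inner_sub_right,
    inner_add_left, inner_add_right, real_inner_smul_left, real_inner_smul_right]
    at h1 h4 h6 s1 s2 s3 ⊢
  linarith [h1, h4, h6, s1, s2, s3, cab, cac, cae, cbc, cbe, cce]

/-- Potential decrease for Optimistic Gradient with equal stepsizes
`4ρ ≤ γ ≤ 10/(31L)` under `L`-Lipschitzness and `ρ`-negative comonotonicity
with `ρ ≤ 5/(62L)`: for all `k ≥ 1`,
`‖F(x^{k+1})‖² + ‖F(x^{k+1}) − F(x̃^k)‖² ≤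
  ‖F(x^k)‖² + ‖F(x^k) − F(x̃^{k−1})‖² − (1/100)‖F(x̃^k) − F(x̃^{k−1})‖²`. -/
theorem stmt_18 {d : ℕ} (ρ L : ℝ) (hρ : 0 ≤ ρ) (hL : 0 < L)
    (F : EuclideanSpace ℝ (Fin d) → EuclideanSpace ℝ (Fin d))
    (hLip : ∀ x y, ‖F x - F y‖ ≤ L * ‖x - y‖)
    (hcomon : ∀ x y, ⟪F x - F y, x - y⟫ ≥ -ρ * ‖F x - F y‖ ^ 2)
    (hρL : ρ ≤ 5 / (62 * L))
    (γ : ℝ) (hγl : 4 * ρ ≤ γ) (hγu : γ ≤ 10 / (31 * L))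
    (x xt : ℕ → EuclideanSpace ℝ (Fin d))
    (hxt0 : xt 0 = x 0)
    (hxt : ∀ k : ℕ, xt (k + 1) = x (k + 1) - γ • F (xt k))
    (hx : ∀ k : ℕ, x (k + 1) = x k - γ • F (xt k)) :
    ∀ k : ℕ, 1 ≤ k →
      ‖F (x (k + 1))‖ ^ 2 + ‖F (x (k + 1)) - F (xt k)‖ ^ 2 ≤
        ‖F (x k)‖ ^ 2 + ‖F (x k) - F (xt (k - 1))‖ ^ 2
          - (1 / 100) * ‖F (xt k) - F (xt (k - 1))‖ ^ 2 := by
  intro k hk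
  obtain ⟨m, rfl⟩ : ∃ m, k = m + 1 := ⟨k - 1, (Nat.succ_pred_eq_of_pos hk).symm⟩
  simp only [Nat.add_sub_cancel]
  rcases eq_or_lt_of_le (le_trans (by linarith : (0:ℝ) ≤ 4 * ρ) hγl) with hγ0 | hγpos
  · -- γ = 0 : everything is constant
    have hγ0 : γ = 0 := hγ0.symm
    subst hγ0
    simp only [zero_smul, sub_zero] at hxt hx
    have hxc : ∀ n, x n = x 0 := by
      intro n; induction n with
      | zero => rfl
      | succ n ih => rw [hx n, ih]
    have hxtc : ∀ n, xt n = x 0 := by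
      intro n; cases n with
      | zero => exact hxt0
      | succ n => rw [hxt n, hxc (n+1)]
    simp [hxc, hxtc]
  · have hγ4 : (0:ℝ) ≤ γ / 4 - ρ := by linarith
    have heq1 : x (m + 1 + 1) - xt (m + 1)
        = γ • (F (xt m) - F (xt (m + 1))) := by
      calc x (m + 1 + 1) - xt (m + 1)
          = (x (m + 1) - γ • F (xt (m + 1))) - (x (m + 1) - γ • F (xt m)) := by
            rw [← hx (m + 1), ← hxt m]
        _ = γ • (F (xt m) - F (xt (m + 1))) := by rw [smul_sub]; abel
    have heq2 : x (m + 1 + 1) - x (m + 1) = -(γ • F (xt (m + 1))) := by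
      rw [hx (m + 1)]; abel
    have hL0 : (L:ℝ) ≠ 0 := ne_of_gt hL
    have hLγ : L * γ ≤ 10 / 31 := by
      have h := mul_le_mul_of_nonneg_left hγu hL.le
      have h2 : L * (10 / (31 * L)) = 10 / 31 := by field_simp
      linarith
    set a := F (x (m + 1 + 1)) with ha
    set b := F (xt (m + 1)) with hb
    set c := F (x (m + 1)) with hc
    set e := F (xt m) with he
    -- Lipschitz bound
    have h1' : ‖a - b‖ ≤ (L * γ) * ‖b - e‖ := by
      have h := hLip (x (m + 1 + 1)) (xt (m + 1))
      rw [heq1, norm_smul, Real.norm_eq_abs, abs_of_pos hγpos, ← norm_neg (e - b),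
        neg_sub] at h
      calc ‖a - b‖ ≤ L * (γ * ‖b - e‖) := h
        _ = (L * γ) * ‖b - e‖ := by ring
    have h1'' : ‖a - b‖ ≤ (10 / 31) * ‖b - e‖ :=
      le_trans h1' (mul_le_mul_of_nonneg_right hLγ (norm_nonneg _))
    have h1 : ‖a - b‖ ^ 2 ≤ (100 / 961) * ‖b - e‖ ^ 2 := by
      nlinarith [mul_self_le_mul_self (norm_nonneg (a - b)) h1'']
    -- comonotonicity at (x^{k+1}, x̃^k)
    have h4 : ⟪a - b, e - b⟫ ≥ -(1 / 4) * ‖a - b‖ ^ 2 := by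
      have h := hcomon (x (m + 1 + 1)) (xt (m + 1))
      rw [heq1, real_inner_smul_right] at h
      have hmul : γ * (-(1 / 4) * ‖a - b‖ ^ 2) ≤ γ * ⟪a - b, e - b⟫ := by
        have hp := mul_nonneg hγ4 (sq_nonneg ‖a - b‖)
        linarith [h, hp]
      exact le_of_mul_le_mul_left hmul hγpos
    -- comonotonicity at (x^{k+1}, x^k)
    have h6 : ⟪a - c, b⟫ ≤ (1 / 4) * ‖a - c‖ ^ 2 := by
      have h := hcomon (x (m + 1 + 1)) (x (m + 1))
      rw [heq2, inner_neg_right, real_inner_smul_right] at h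
      have hmul : γ * ⟪a - c, b⟫ ≤ γ * ((1 / 4) * ‖a - c‖ ^ 2) := by
        have hp := mul_nonneg hγ4 (sq_nonneg ‖a - c‖)
        linarith [h, hp]
      exact le_of_mul_le_mul_left hmul hγpos
    exact key_ineq a b c e h1 h4 h6
end
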